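/- arXiv:1104.5605 — 7 statements merged into one kernel-verified Lean document; each statement's English description precedes it below -/
import Mathlib

section
/- Every mechanical word with irrational rotation number is Sturmian: if α ∈ (0,1) is irrational, x₀ ∈ [0,1), and w_n = a if {x₀ + nα} ∈ [0, α) and w_n = b otherwise, then for every n ≥ 1 the word w has exactly n+1 distinct factors of length n. -/
/-- `u` is a factor (finite contiguous subword) of the infinite word `W`. -/
def FactorOf {A : Type*} (u : List A) (W : ℕ → A) : Prop :=
  ∃ i : ℕ, u = (List.range u.length).map fun j => W (i + j)

open Set


lemma dense_sub (α : ℝ) (hα : Irrational α) :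
    Dense ((AddSubgroup.closure {1, α} : AddSubgroup ℝ) : Set ℝ) := by
  rcases AddSubgroup.dense_or_cyclic (AddSubgroup.closure {1, α}) with h | ⟨a, ha⟩
  · exact h
  · exfalso
    have h1 : (1 : ℝ) ∈ AddSubgroup.closure ({1, α} : Set ℝ) :=
      AddSubgroup.subset_closure (by simp)
    have h2 : α ∈ AddSubgroup.closure ({1, α} : Set ℝ) :=
      AddSubgroup.subset_closure (by simp)
    rw [ha, ← AddSubgroup.zmultiples_eq_closure] at h1 h2
    obtain ⟨m, hm⟩ := h1
    obtain ⟨k, hk⟩ := h2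
    simp only [zsmul_eq_mul] at hm hk
    have hm0 : (m : ℝ) ≠ 0 := by
      intro h; rw [h, zero_mul] at hm; exact one_ne_zero hm.symm
    have hαr : α = (k : ℝ) / (m : ℝ) := by
      rw [eq_div_iff hm0, ← hk]
      linear_combination (k:ℝ) * hm
    exact hα ⟨(k : ℚ) / (m : ℚ), by push_cast; rw [← hαr]⟩

lemma dense_orbit (α x₀ : ℝ) (hα : Irrational α) :
    ∀ a b : ℝ, 0 ≤ a → a < b → b ≤ 1 → ∃ i : ℕ, Int.fract (x₀ + i * α) ∈ Set.Ioo a b := by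
  haveI : Fact ((0:ℝ) < 1) := ⟨one_pos⟩
  set π : ℝ → AddCircle (1:ℝ) := fun x => (x : AddCircle (1:ℝ)) with hπ
  have hπc : Continuous π := AddCircle.continuous_mk' 1
  have hπs : Function.Surjective π := Quotient.exists_rep
  have hd1 : Dense (π '' ((AddSubgroup.closure {1, α} : AddSubgroup ℝ) : Set ℝ)) :=
    (hπs.denseRange).dense_image hπc (dense_sub α hα)
  have hsub : π '' ((AddSubgroup.closure {1, α} : AddSubgroup ℝ) : Set ℝ)
      ⊆ ((AddSubgroup.zmultiples (π α) : AddSubgroup (AddCircle (1:ℝ))) : Set (AddCircle (1:ℝ))) := by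
    rintro _ ⟨x, hx, rfl⟩
    rw [SetLike.mem_coe, AddSubgroup.mem_closure_pair] at hx
    obtain ⟨m, k, rfl⟩ := hx
    rw [SetLike.mem_coe, AddSubgroup.mem_zmultiples_iff]
    refine ⟨k, ?_⟩
    have h1 : π (1:ℝ) = 0 := by
      simp [π]
    have : π (m • (1:ℝ) + k • α) = m • π (1:ℝ) + k • π α := by
      simp only [π, AddCircle.coe_add, AddCircle.coe_zsmul]
    rw [this, h1, smul_zero, zero_add]
  have hdz : Dense ((AddSubgroup.zmultiples (π α) : AddSubgroup (AddCircle (1:ℝ))) : Set (AddCircle (1:ℝ))) :=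
    hd1.mono hsub
  -- ℤ-orbit dense ⇒ ℕ-orbit dense
  have hz : DenseRange (fun k : ℤ => k • π α) := by
    intro x
    have := hdz x
    have e : (Set.range fun k : ℤ => k • π α) = ((AddSubgroup.zmultiples (π α) : AddSubgroup (AddCircle (1:ℝ))) : Set (AddCircle (1:ℝ))) := by
      ext y; simp [AddSubgroup.mem_zmultiples_iff]
    rw [e]; exact this
  have hn : DenseRange (fun k : ℕ => k • π α) := denseRange_zsmul_iff_nsmul.mp hz
  intro a b ha hab hb1
  -- the target open set
  have hopen : IsOpen (π '' Set.Ioo a b) :=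
    QuotientAddGroup.isOpenMap_coe _ isOpen_Ioo
  have hne : (π ((a+b)/2)) ∈ π '' Set.Ioo a b :=
    ⟨(a+b)/2, by constructor <;> linarith, rfl⟩
  -- translate by x₀
  have hda : Dense (Set.range fun k : ℕ => π x₀ + k • π α) := by
    have := (Homeomorph.addLeft (π x₀)).isDenseEmbedding.toIsDenseInducing.dense_image.mpr hn
    rw [← Set.range_comp] at this
    exact this
  obtain ⟨y, hy1, hy2⟩ := hda.exists_mem_open hopen ⟨_, hne⟩
  obtain ⟨i, rfl⟩ := hy1
  obtain ⟨s, hs, hps⟩ := hy2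
  refine ⟨i, ?_⟩
  have heq : π (x₀ + i * α) = π s := by
    rw [hps]
    show ((x₀ + (i:ℝ) * α : ℝ) : AddCircle (1:ℝ)) = (x₀ : AddCircle (1:ℝ)) + i • (α : AddCircle (1:ℝ))
    rw [← AddCircle.coe_nsmul, ← AddCircle.coe_add, nsmul_eq_mul]
  have hmem : (x₀ + i * α) - s ∈ AddSubgroup.zmultiples (1:ℝ) := by
    rw [QuotientAddGroup.eq_iff_sub_mem] at heq
    exact heq
  obtain ⟨z, hz'⟩ := hmem
  have hfr : Int.fract (x₀ + i * α) = s := by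
    have hs01 : s ∈ Set.Ico (0:ℝ) 1 := ⟨le_trans ha hs.1.le, lt_of_lt_of_le hs.2 hb1⟩
    have hzz : x₀ + i * α = s + z := by
      have := hz'
      simp only [zsmul_eq_mul, mul_one] at this
      linarith
    rw [hzz, Int.fract_add_intCast, Int.fract_eq_self.mpr hs01]
  rw [hfr]; exact hs


noncomputable def stc (α : ℝ) (j : ℕ) : ℝ := Int.fract (-(j * α))

lemma stc_mem (α : ℝ) (j : ℕ) : stc α j ∈ Set.Ico (0:ℝ) 1 :=
  ⟨Int.fract_nonneg _, Int.fract_lt_one _⟩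

lemma stc_zero (α : ℝ) : stc α 0 = 0 := by simp [stc]

-- rationality helper
lemma irr_aux {α : ℝ} (hα : Irrational α) (d m : ℤ) (hd : d ≠ 0) (h : (d:ℝ) * α = m) : False := by
  have hd0 : (d : ℝ) ≠ 0 := Int.cast_ne_zero.mpr hd
  exact hα ⟨(m : ℚ) / (d : ℚ), by push_cast; field_simp at h ⊢; linarith [h]⟩

lemma stc_inj {α : ℝ} (hα : Irrational α) : Function.Injective (stc α) := by
  intro j k h
  by_contra hne
  obtain ⟨z, hz⟩ := Int.fract_eq_fract.mp h
  refine irr_aux hα ((k:ℤ) - j) z (by omega) ?_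
  push_cast; push_cast at hz; linarith

lemma stc_ne_alpha {α : ℝ} (hα : Irrational α) (j : ℕ) : stc α j ≠ α := by
  intro h
  have : Int.fract (-(j * α)) = -(j*α) - ⌊-(j*α)⌋ := rfl
  rw [stc, this] at h
  refine irr_aux hα ((j:ℤ) + 1) (-⌊-((j:ℝ) * α)⌋) (by omega) ?_
  push_cast; linarith

-- the successor relation: fract (stc α (j+1) + α) = stc α j, and fract (stc α 0 + α) = α
lemma stc_succ (α : ℝ) (j : ℕ) : Int.fract (stc α (j+1) + α) = stc α j := by
  have h1 : Int.fract (stc α (j+1) + α) = Int.fract (-(((j+1):ℕ) * α) + α) := by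
    apply Int.fract_eq_fract.mpr
    refine ⟨-⌊-((((j:ℕ)+1):ℕ) * α)⌋, ?_⟩
    rw [stc, ← Int.self_sub_floor]
    push_cast
    ring
  rw [h1, stc]
  congr 1
  push_cast
  ring

lemma fract_stc_zero_add (α : ℝ) (h0 : 0 ≤ α) (h1 : α < 1) :
    Int.fract (stc α 0 + α) = α := by
  rw [stc_zero, zero_add, Int.fract_eq_self.mpr ⟨h0, h1⟩]

-- membership formula
lemma mem_iff {α : ℝ} (z : ℝ) (hz : z ∈ Set.Ico (0:ℝ) 1) (j : ℕ) :
    (Int.fract (z + j * α) < α) ↔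
      (if stc α j ≤ z then z - stc α j else z - stc α j + 1) < α := by
  have h1 : Int.fract (z + j * α) = Int.fract (z - stc α j) := by
    apply Int.fract_eq_fract.mpr
    refine ⟨-⌊-((j:ℝ) * α)⌋, ?_⟩
    rw [stc, ← Int.self_sub_floor]
    push_cast
    ring
  rw [h1]
  rcases stc_mem α j with ⟨hc0, hc1⟩
  by_cases h : stc α j ≤ z
  · rw [if_pos h, Int.fract_eq_self.mpr ⟨by linarith, by linarith [hz.2]⟩]
  · push_neg at h
    rw [if_neg (not_le.mpr h)]
    have : Int.fract (z - stc α j) = Int.fract (z - stc α j + 1) :=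
      (Int.fract_eq_fract.mpr ⟨-1, by push_cast; ring⟩)
    rw [this, Int.fract_eq_self.mpr ⟨by linarith [hz.1], by linarith⟩]

noncomputable def stP (α : ℝ) (n : ℕ) : Finset ℝ := insert α ((Finset.range n).image (stc α))

lemma stP_card {α : ℝ} (hα : Irrational α) (n : ℕ) : (stP α n).card = n + 1 := by
  rw [stP, Finset.card_insert_of_notMem, Finset.card_image_of_injective _ (stc_inj hα),
    Finset.card_range]
  intro h
  obtain ⟨j, _, hj⟩ := Finset.mem_image.mp h
  exact stc_ne_alpha hα j hj

lemma stP_subset {α : ℝ} (h0 : 0 < α) (h1 : α < 1) {n : ℕ} {p : ℝ} (hp : p ∈ stP α n) :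
    p ∈ Set.Ico (0:ℝ) 1 := by
  rw [stP, Finset.mem_insert] at hp
  rcases hp with rfl | hp
  · exact ⟨h0.le, h1⟩
  · obtain ⟨j, _, rfl⟩ := Finset.mem_image.mp hp
    exact stc_mem α j

lemma zero_mem_stP {α : ℝ} {n : ℕ} (hn : 1 ≤ n) : (0:ℝ) ∈ stP α n := by
  rw [stP, Finset.mem_insert]
  right
  exact Finset.mem_image.mpr ⟨0, Finset.mem_range.mpr hn, stc_zero α⟩

/-- Constancy: points in the same cell have the same letters. -/
lemma same_cell_same_letters {α : ℝ} (hα : Irrational α) (h0 : 0 < α) (h1 : α < 1)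
    {n : ℕ} (hn : 1 ≤ n) {x y : ℝ} (hx : x ∈ Set.Ico (0:ℝ) 1) (hy : y ∈ Set.Ico (0:ℝ) 1)
    (hc : ∀ p ∈ stP α n, (p ≤ x ↔ p ≤ y)) :
    ∀ j < n, (Int.fract (x + j * α) < α ↔ Int.fract (y + j * α) < α) := by
  intro j hj
  set c := stc α j with hcdef
  have hcP : c ∈ stP α n := by
    rw [stP, Finset.mem_insert]; right
    exact Finset.mem_image.mpr ⟨j, Finset.mem_range.mpr hj, rfl⟩
  have hcI := stc_mem α j
  have hc'P : Int.fract (c + α) ∈ stP α n := by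
    cases j with
    | zero =>
        rw [hcdef, fract_stc_zero_add α h0.le h1, stP]
        exact Finset.mem_insert_self _ _
    | succ j' =>
        rw [hcdef, stc_succ α j', stP, Finset.mem_insert]; right
        exact Finset.mem_image.mpr ⟨j', Finset.mem_range.mpr (by omega), rfl⟩
  rw [mem_iff x hx j, mem_iff y hy j, ← hcdef]
  by_cases hlt : c + α < 1
  · have hc' : Int.fract (c + α) = c + α :=
      Int.fract_eq_self.mpr ⟨by linarith [hcI.1], hlt⟩
    have key : ∀ z : ℝ, z ∈ Set.Ico (0:ℝ) 1 →
        ((if c ≤ z then z - c else z - c + 1) < α ↔ (c ≤ z ∧ ¬ (Int.fract (c + α) ≤ z))) := by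
      intro z hz
      rw [hc']
      by_cases h : c ≤ z
      · rw [if_pos h]; constructor
        · intro hh; exact ⟨h, by linarith⟩
        · intro ⟨_, hh⟩; push_neg at hh; linarith
      · rw [if_neg h]; push_neg at h
        constructor
        · intro hh; linarith [hz.1]
        · intro ⟨hh, _⟩; linarith
    rw [key x hx, key y hy, hc c hcP, hc _ hc'P]
  · push_neg at hlt
    have hc' : Int.fract (c + α) = c + α - 1 := by
      have : Int.fract (c + α) = Int.fract (c + α - 1) :=
        Int.fract_eq_fract.mpr ⟨1, by push_cast; ring⟩
      rw [this, Int.fract_eq_self.mpr ⟨by linarith, by linarith [hcI.2, h1]⟩]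
    have key : ∀ z : ℝ, z ∈ Set.Ico (0:ℝ) 1 →
        ((if c ≤ z then z - c else z - c + 1) < α ↔ (c ≤ z ∨ ¬ (Int.fract (c + α) ≤ z))) := by
      intro z hz
      rw [hc']
      by_cases h : c ≤ z
      · rw [if_pos h]
        constructor
        · intro _; exact Or.inl h
        · intro _; linarith [hz.2]
      · rw [if_neg h]; push_neg at h
        constructor
        · intro hh; right; push_neg; linarith
        · intro hh
          rcases hh with hh | hh
          · exact absurd hh h.not_ge
          · push_neg at hh; linarith
    rw [key x hx, key y hy, hc c hcP, hc _ hc'P]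

/-- Injectivity: same letters implies same cell. -/
lemma same_letters_same_cell {α : ℝ} (h0 : 0 < α) (h1 : α < 1)
    {n : ℕ} (hn : 1 ≤ n) {x y : ℝ} (hx : x ∈ Set.Ico (0:ℝ) 1) (hy : y ∈ Set.Ico (0:ℝ) 1)
    (hL : ∀ j < n, (Int.fract (x + j * α) < α ↔ Int.fract (y + j * α) < α)) :
    ∀ p ∈ stP α n, p ≤ x → p ≤ y := by
  have hL0 : (x < α ↔ y < α) := by
    have := hL 0 hn
    rwa [Nat.cast_zero, zero_mul, add_zero, add_zero,
      Int.fract_eq_self.mpr hx, Int.fract_eq_self.mpr hy] at this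
  have key : ∀ j, j < n → ¬ (y < stc α j ∧ stc α j ≤ x) := by
    intro j
    induction j with
    | zero => intro _ ⟨hy1, _⟩; rw [stc_zero] at hy1; exact absurd hy1 (not_lt.mpr hy.1)
    | succ j ih =>
        intro hj ⟨hy1, hx1⟩
        set c := stc α (j+1) with hcdef
        have hcI := stc_mem α (j+1)
        have hMx : (Int.fract (x + (j+1 : ℕ) * α) < α) ↔ x - c < α := by
          rw [mem_iff x hx (j+1), ← hcdef, if_pos hx1]
        have hMy : (Int.fract (y + (j+1 : ℕ) * α) < α) ↔ y - c + 1 < α := by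
          rw [mem_iff y hy (j+1), ← hcdef, if_neg (not_le.mpr hy1)]
        have hiff := (hL (j+1) hj)
        have hsucc : Int.fract (c + α) = stc α j := stc_succ α j
        apply ih (by omega)
        by_cases hlt : c + α < 1
        · have hc' : Int.fract (c + α) = c + α :=
            Int.fract_eq_self.mpr ⟨by linarith [hcI.1], hlt⟩
          have hMyF : ¬ (Int.fract (y + (j+1 : ℕ) * α) < α) := by
            rw [hMy]; push_neg; linarith [hy.1]
          have hMxF : ¬ (x - c < α) := by
            rw [← hMx]; intro h; exact hMyF (hiff.mp h)
          push_neg at hMxF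
          constructor
          · rw [← hsucc, hc']; linarith
          · rw [← hsucc, hc']; linarith
        · push_neg at hlt
          have hc' : Int.fract (c + α) = c + α - 1 := by
            have : Int.fract (c + α) = Int.fract (c + α - 1) :=
              Int.fract_eq_fract.mpr ⟨1, by push_cast; ring⟩
            rw [this, Int.fract_eq_self.mpr ⟨by linarith, by linarith [hcI.2]⟩]
          have hMxT : Int.fract (x + (j+1 : ℕ) * α) < α := by
            rw [hMx]; linarith [hx.2]
          have hMyT : y - c + 1 < α := by rw [← hMy]; exact hiff.mp hMxT
          constructor
          · rw [← hsucc, hc']; linarith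
          · rw [← hsucc, hc']; linarith
  intro p hp hpx
  by_contra hpy
  push_neg at hpy
  rw [stP, Finset.mem_insert] at hp
  rcases hp with rfl | hp
  · exact absurd (hL0.mpr hpy) (not_lt.mpr hpx)
  · obtain ⟨j, hj, rfl⟩ := Finset.mem_image.mp hp
    exact key j (Finset.mem_range.mp hj) ⟨hpy, hpx⟩

lemma exists_rep_max (P : Finset ℝ) (z : ℝ) (hne : (P.filter (fun p => p ≤ z)).Nonempty) :
    ∃ p ∈ P, p ≤ z ∧ ∀ q ∈ P, q ≤ z → q ≤ p := by
  obtain ⟨hpP, hpz⟩ := Finset.mem_filter.mp ((P.filter (fun p => p ≤ z)).max'_mem hne)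
  exact ⟨_, hpP, hpz, fun q hq hqz =>
    (P.filter (fun p => p ≤ z)).le_max' q (Finset.mem_filter.mpr ⟨hq, hqz⟩)⟩

lemma exists_next (P : Finset ℝ) (p : ℝ) (hlt : ∀ q ∈ P, q < 1) (hp1 : p < 1) :
    ∃ nx, p < nx ∧ nx ≤ 1 ∧ ∀ q ∈ P, p < q → nx ≤ q := by
  by_cases hne : (P.filter (fun q => p < q)).Nonempty
  · obtain ⟨hP, hlt'⟩ := Finset.mem_filter.mp ((P.filter (fun q => p < q)).min'_mem hne)
    exact ⟨_, hlt', (hlt _ hP).le, fun q hq hpq =>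
      (P.filter (fun q => p < q)).min'_le q (Finset.mem_filter.mpr ⟨hq, hpq⟩)⟩
  · exact ⟨1, hp1, le_rfl, fun q hq hpq => absurd ⟨q, Finset.mem_filter.mpr ⟨hq, hpq⟩⟩ hne⟩

/-- Every mechanical word with irrational rotation number is Sturmian. -/
theorem stmt1 (α x₀ : ℝ) (hα : Irrational α) (h0 : 0 < α) (h1 : α < 1)
    (hx : x₀ ∈ Set.Ico (0 : ℝ) 1)
    (w : ℕ → Bool) (hw : ∀ n : ℕ, w n = decide (Int.fract (x₀ + n * α) < α)) :
    ∀ n : ℕ, 1 ≤ n →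
      {u : List Bool | u.length = n ∧ FactorOf u w}.ncard = n + 1 := by
  intro n hn
  set g : ℝ → List Bool :=
    fun z => (List.range n).map (fun j : ℕ => decide (Int.fract (z + (j:ℝ) * α) < α)) with hg
  have glen : ∀ z, (g z).length = n := by intro z; simp [hg]
  have gEq : ∀ x y : ℝ,
      (g x = g y ↔ ∀ j < n, (Int.fract (x + j * α) < α ↔ Int.fract (y + j * α) < α)) := by
    intro x y
    constructor
    · intro h j hj
      have hjx : j < (g x).length := by rw [glen]; exact hj
      have h1 := List.getElem_of_eq h hjx
      simp only [hg, List.getElem_map, List.getElem_range] at h1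
      exact decide_eq_decide.mp h1
    · intro h
      apply List.map_congr_left
      intro j hj
      exact decide_eq_decide.mpr (h j (List.mem_range.mp hj))
  have hshift : ∀ t s : ℝ, Int.fract (Int.fract t + s) = Int.fract (t + s) := by
    intro t s
    apply Int.fract_eq_fract.mpr
    exact ⟨-⌊t⌋, by rw [← Int.self_sub_floor]; push_cast; ring⟩
  set O : Set ℝ := Set.range (fun i : ℕ => Int.fract (x₀ + i * α)) with hO
  have hOI : ∀ z ∈ O, z ∈ Set.Ico (0:ℝ) 1 := by
    rintro _ ⟨i, rfl⟩
    exact ⟨Int.fract_nonneg _, Int.fract_lt_one _⟩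
  have hgw : ∀ i : ℕ, List.map (fun j => w (i + j)) (List.range n) = g (Int.fract (x₀ + i * α)) := by
    intro i
    rw [hg]
    apply List.map_congr_left
    intro j hj
    rw [hw (i + j), decide_eq_decide, hshift]
    have : x₀ + (↑(i + j) : ℝ) * α = x₀ + ↑i * α + ↑j * α := by push_cast; ring
    rw [this]
  -- the factor set is the image of the orbit
  have hFO : {u : List Bool | u.length = n ∧ FactorOf u w} = g '' O := by
    ext u
    simp only [Set.mem_setOf_eq, Set.mem_image, FactorOf]
    constructor
    · rintro ⟨hlen, i, hu⟩
      refine ⟨Int.fract (x₀ + i * α), ⟨i, rfl⟩, ?_⟩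
      rw [hu, hlen, hgw i]
    · rintro ⟨z, hz, rfl⟩
      obtain ⟨i, rfl⟩ := hz
      exact ⟨glen _, i, by rw [glen, hgw i]⟩
  -- image of orbit = image of P
  have hOP : g '' O = g '' ((stP α n : Finset ℝ) : Set ℝ) := by
    apply Set.Subset.antisymm
    · rintro _ ⟨z, hzO, rfl⟩
      have hzI := hOI z hzO
      obtain ⟨p, hpP, hpz, hmax⟩ := exists_rep_max (stP α n) z
        ⟨0, Finset.mem_filter.mpr ⟨zero_mem_stP hn, hzI.1⟩⟩
      refine ⟨p, hpP, ?_⟩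
      refine (gEq p z).mpr ?_
      exact fun j hj => same_cell_same_letters hα h0 h1 hn (stP_subset h0 h1 hpP) hzI
        (fun q hq => ⟨fun h => le_trans h hpz, fun h => hmax q hq h⟩) j hj
    · rintro _ ⟨p, hpP, rfl⟩
      have hpI := stP_subset h0 h1 hpP
      obtain ⟨nx, hpnx, hnx1, hnxle⟩ := exists_next (stP α n) p
        (fun q hq => (stP_subset h0 h1 hq).2) hpI.2
      obtain ⟨i, hi⟩ := dense_orbit α x₀ hα p nx hpI.1 hpnx hnx1
      refine ⟨Int.fract (x₀ + i * α), ⟨i, rfl⟩, ?_⟩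
      have hzI : Int.fract (x₀ + i * α) ∈ Set.Ico (0:ℝ) 1 :=
        ⟨Int.fract_nonneg _, Int.fract_lt_one _⟩
      refine ((gEq p (Int.fract (x₀ + i * α))).mpr ?_).symm
      refine fun j hj => same_cell_same_letters hα h0 h1 hn hpI hzI (fun q hq => ?_) j hj
      constructor
      · intro h; linarith [hi.1]
      · intro h
        by_contra hqp
        push_neg at hqp
        linarith [hnxle q hq hqp, hi.2]
  have hinj : Set.InjOn g ((stP α n : Finset ℝ) : Set ℝ) := by
    intro p hp q hq hpq
    have hLetters := (gEq p q).mp hpq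
    have e1 := same_letters_same_cell h0 h1 hn (stP_subset h0 h1 hp) (stP_subset h0 h1 hq)
      hLetters p hp le_rfl
    have e2 := same_letters_same_cell h0 h1 hn (stP_subset h0 h1 hq) (stP_subset h0 h1 hp)
      (fun j hj => (hLetters j hj).symm) q hq le_rfl
    linarith
  rw [hFO, hOP, Set.ncard_image_of_injOn hinj, Set.ncard_coe_finset, stP_card hα]
end

section
/- A Sturmian word is not eventually periodic. -/
/-- A Sturmian word is not eventually periodic. -/
theorem stmt2 {A : Type*} [Fintype A] (W : ℕ → A)
    (hst : ∀ n : ℕ, 1 ≤ n →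
      {u : List A | u.length = n ∧ FactorOf u W}.ncard = n + 1) :
    ¬ ∃ N p : ℕ, 0 < p ∧ ∀ n ≥ N, W (n + p) = W n := by
  rintro ⟨N, p, hp, hper⟩
  have hk : ∀ m, N ≤ m → ∀ k, W (m + k * p) = W m := by
    intro m hm k
    induction k with
    | zero => simp
    | succ k ih =>
      have h1 : m + (k + 1) * p = (m + k * p) + p := by ring
      rw [h1, hper _ (by omega), ih]
  set n := N + p with hn
  have hcard := hst n (by omega)
  have hsub : {u : List A | u.length = n ∧ FactorOf u W} ⊆
      (fun i => (List.range n).map fun j => W (i + j)) '' (Set.Iio n) := by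
    rintro u ⟨hlen, i, hu⟩
    by_cases hi : i < n
    · exact ⟨i, hi, by rw [hu, hlen]⟩
    · refine ⟨N + (i - N) % p, ?_, ?_⟩
      · have := Nat.mod_lt (i - N) hp; simp only [Set.mem_Iio]; omega
      · rw [hu, hlen]
        apply List.map_congr_left
        intro j _
        have hmd : (i - N) % p + (i - N) / p * p = i - N := by
          rw [Nat.mul_comm]; exact Nat.mod_add_div _ _
        have := hk (N + (i - N) % p + j) (by omega) ((i - N) / p)
        have harg : N + (i - N) % p + j + (i - N) / p * p = i + j := by omega
        rw [harg] at this
        exact this.symm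
  have hfin : (Set.Iio n).Finite := Set.finite_Iio n
  have hle : {u : List A | u.length = n ∧ FactorOf u W}.ncard ≤
      ((fun i => (List.range n).map fun j => W (i + j)) '' (Set.Iio n)).ncard :=
    Set.ncard_le_ncard hsub (hfin.image _)
  have him : ((fun i => (List.range n).map fun j => W (i + j)) '' (Set.Iio n)).ncard ≤
      (Set.Iio n).ncard := Set.ncard_image_le hfin
  have hIio : (Set.Iio n).ncard = n := by
    rw [Set.ncard_def, show Set.Iio n = {i | i < n} from rfl, Set.Nat.encard_range]
    rfl
  omega
end

section
/- If the complexity function of an infinite word W satisfies T_W(n+1) = T_W(n) for some n, then W is eventually periodic, and consequently T_W is eventually constant. -/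
namespace Stmt3Aux

variable {A : Type*}

/-- The factor of `W` of length `k` starting at position `i`. -/
def Fct (W : ℕ → A) (i k : ℕ) : List A := (List.range k).map fun j => W (i + j)

/-- The set of factors of length `k`. -/
def SS (W : ℕ → A) (k : ℕ) : Set (List A) := Set.range fun i => Fct W i k

@[simp] lemma Fct_length (W : ℕ → A) (i k : ℕ) : (Fct W i k).length = k := by
  simp [Fct]

lemma setEq (W : ℕ → A) (k : ℕ) :
    {u : List A | u.length = k ∧ FactorOf u W} = SS W k := by
  ext u
  constructor
  · rintro ⟨hl, i, hu⟩
    exact ⟨i, by rw [hu, hl]; rfl⟩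
  · rintro ⟨i, rfl⟩
    exact ⟨by simp, i, by simp [Fct]⟩

lemma Fct_succ (W : ℕ → A) (i k : ℕ) :
    Fct W i (k + 1) = Fct W i k ++ [W (i + k)] := by
  simp [Fct, List.range_succ]

lemma dropLast_Fct (W : ℕ → A) (i k : ℕ) :
    (Fct W i (k + 1)).dropLast = Fct W i k := by
  rw [Fct_succ]; exact List.dropLast_concat ..

lemma finite_SS (W : ℕ → A) [Fintype A] (k : ℕ) : (SS W k).Finite :=
  (List.finite_length_eq A k).subset (by rintro u ⟨i, rfl⟩; simp)

lemma image_dropLast (W : ℕ → A) (k : ℕ) :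
    List.dropLast '' SS W (k + 1) = SS W k := by
  unfold SS
  rw [← Set.range_comp]
  exact congrArg _ (funext fun i => dropLast_Fct W i k)

/-- Extract an individual letter equality from an equality of factors. -/
lemma Fct_letter {W : ℕ → A} {a b k t : ℕ} (ht : t < k)
    (hab : Fct W a k = Fct W b k) : W (a + t) = W (b + t) := by
  have h1 : (Fct W a k)[t]'(by simpa using ht) = (Fct W b k)[t]'(by simpa using ht) :=
    List.getElem_of_eq hab _
  simpa [Fct] using h1

/-- Shift lemma: if two length-`n` factors agree, then all their translates agree. -/
lemma Fct_shift (W : ℕ → A) (n : ℕ)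
    (key : ∀ i j, Fct W i n = Fct W j n → Fct W i (n + 1) = Fct W j (n + 1))
    (i j : ℕ) (hij : Fct W i n = Fct W j n) :
    ∀ m, Fct W (i + m) n = Fct W (j + m) n := by
  intro m
  induction m with
  | zero => simpa using hij
  | succ m ih =>
    have h1 := key _ _ ih
    apply List.ext_getElem (by simp) (fun t ht1 ht2 => ?_)
    have ht : t < n := by simpa using ht1
    have := Fct_letter (a := i + m) (b := j + m) (k := n + 1) (t := t + 1) (by omega) h1
    have e1 : i + m + (t + 1) = i + (m + 1) + t := by omega
    have e2 : j + m + (t + 1) = j + (m + 1) + t := by omega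
    rw [e1, e2] at this
    simpa [Fct] using this

end Stmt3Aux

open Stmt3Aux in
/-- If the complexity does not grow at some `n`, then `W` is eventually periodic
and the complexity function is eventually constant. -/
theorem stmt3 {A : Type*} [Fintype A] (W : ℕ → A) (n : ℕ)
    (h : {u : List A | u.length = n + 1 ∧ FactorOf u W}.ncard =
      {u : List A | u.length = n ∧ FactorOf u W}.ncard) :
    (∃ N p : ℕ, 0 < p ∧ ∀ k ≥ N, W (k + p) = W k) ∧
      ∃ C N : ℕ, ∀ k ≥ N,
        {u : List A | u.length = k ∧ FactorOf u W}.ncard = C := by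
  classical
  have hset : ∀ k, {u : List A | u.length = k ∧ FactorOf u W} = SS W k := fun k => setEq W k
  have hfin : ∀ k, (SS W k).Finite := fun k => finite_SS W k
  rw [hset, hset] at h
  -- injectivity of dropLast on SS W (n+1)
  have hinj : Set.InjOn List.dropLast (SS W (n + 1)) := by
    apply Set.injOn_of_ncard_image_eq _ (hfin _)
    rw [image_dropLast, h]
  -- key: same length-n factor implies same length-(n+1) factor
  have key : ∀ i j, Fct W i n = Fct W j n → Fct W i (n + 1) = Fct W j (n + 1) := by
    intro i j hij
    apply hinj ⟨i, rfl⟩ ⟨j, rfl⟩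
    rw [dropLast_Fct, dropLast_Fct]; exact hij
  -- pigeonhole: two positions with the same length-n factor
  have hpig : ∃ i j : ℕ, i ≠ j ∧ Fct W i n = Fct W j n := by
    have : Finite (SS W n) := (hfin n).to_subtype
    obtain ⟨i, j, hne, hval⟩ := Finite.exists_ne_map_eq_of_infinite
      (fun i : ℕ => (⟨Fct W i n, ⟨i, rfl⟩⟩ : SS W n))
    exact ⟨i, j, hne, by simpa using congrArg Subtype.val hval⟩
  obtain ⟨i, j, hne, hval⟩ := hpig
  -- wlog i < j
  obtain ⟨i, j, hlt, hval⟩ : ∃ i j : ℕ, i < j ∧ Fct W i n = Fct W j n := by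
    rcases lt_or_gt_of_ne hne with hl | hl
    · exact ⟨i, j, hl, hval⟩
    · exact ⟨j, i, hl, hval.symm⟩
  -- eventual periodicity
  have hshift := Fct_shift W n key i j hval
  set N := i + n with hN
  set p := j - i with hp
  have hper : ∀ k ≥ N, W (k + p) = W k := by
    intro k hk
    have hk' : k = i + (k - N) + n := by omega
    have h1 := key _ _ (hshift (k - N))
    have := Fct_letter (k := n + 1) (t := n) (by omega) h1
    have e1 : j + (k - N) + n = k + p := by omega
    have e2 : i + (k - N) + n = k := by omega
    rw [e1, e2] at this
    exact this.symm
  have hppos : 0 < p := by omega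
  refine ⟨⟨N, p, hppos, hper⟩, ?_⟩
  -- part 2: complexity is eventually constant
  -- T is monotone
  have hmono : Monotone fun k => (SS W k).ncard := by
    apply monotone_nat_of_le_succ
    intro k
    rw [← image_dropLast W k]
    exact Set.ncard_image_le (hfin _)
  -- T is bounded by N + p
  have hbdd : ∀ k, (SS W k).ncard ≤ N + p := by
    intro k
    have hsub : SS W k ⊆ (fun i => Fct W i k) '' ((Finset.range (N + p) : Finset ℕ) : Set ℕ) := by
      rintro u ⟨a, rfl⟩
      induction a using Nat.strong_induction_on with
      | _ a ih =>
        rcases lt_or_ge a (N + p) with ha | ha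
        · exact ⟨a, by simpa using ha, rfl⟩
        · have heq : Fct W (a - p) k = Fct W a k := by
            apply List.ext_getElem (by simp) (fun t ht1 ht2 => ?_)
            simp only [Fct, List.getElem_map, List.getElem_range]
            have h1 : a - p + t + p = a + t := by omega
            have := hper (a - p + t) (by omega)
            rw [h1] at this
            exact this.symm
          obtain ⟨b, hb, hb2⟩ := ih (a - p) (by omega)
          exact ⟨b, hb, hb2.trans heq⟩
    calc (SS W k).ncard
        ≤ ((fun i => Fct W i k) '' ((Finset.range (N + p) : Finset ℕ) : Set ℕ)).ncard :=
          Set.ncard_le_ncard hsub (((Finset.range (N + p)).finite_toSet).image _)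
      _ ≤ ((Finset.range (N + p) : Finset ℕ) : Set ℕ).ncard :=
          Set.ncard_image_le ((Finset.range (N + p)).finite_toSet)
      _ = N + p := by rw [Set.ncard_coe_finset, Finset.card_range]
  -- monotone + bounded ⇒ eventually constant
  have hne2 : (Set.range fun k => (SS W k).ncard).Nonempty := Set.range_nonempty _
  have hbdd' : BddAbove (Set.range fun k => (SS W k).ncard) :=
    ⟨N + p, by rintro x ⟨k, rfl⟩; exact hbdd k⟩
  obtain ⟨M, hM⟩ := Nat.sSup_mem hne2 hbdd'
  refine ⟨sSup (Set.range fun k => (SS W k).ncard), M, fun k hk => ?_⟩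
  rw [hset]
  refine le_antisymm (le_csSup hbdd' ⟨k, rfl⟩) ?_
  calc sSup (Set.range fun k => (SS W k).ncard) = (SS W M).ncard := hM.symm
    _ ≤ (SS W k).ncard := hmono hk
end

section
/- For every infinite word W over a finite alphabet there exists a uniformly recurrent infinite word V all of whose factors are factors of W. -/
namespace Stmt4Aux

variable {A : Type*}

def shift (x : ℕ → A) : ℕ → A := fun n => x (n + 1)

lemma shift_iterate (x : ℕ → A) (n j : ℕ) : shift^[n] x j = x (n + j) := by
  induction n generalizing x with
  | zero => simp
  | succ n ih =>
    rw [Function.iterate_succ_apply, ih]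
    simp [shift, Nat.add_assoc, Nat.add_comm 1 j, Nat.succ_add]

def occursAt (u : List A) (x : ℕ → A) (i : ℕ) : Prop :=
  u = (List.range u.length).map fun j => x (i + j)

lemma occursAt_iff (d : A) {u : List A} {x : ℕ → A} {i : ℕ} :
    occursAt u x i ↔ ∀ j < u.length, u.getD j d = x (i + j) := by
  unfold occursAt
  constructor
  · intro h j hj
    conv_lhs => rw [h]
    simp [List.getD_eq_getElem?_getD, hj]
  · intro h
    apply List.ext_getElem (by simp)
    intro j h1 h2
    have := h j h1
    rw [List.getD_eq_getElem?_getD, List.getElem?_eq_getElem h1] at this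
    simpa using this

lemma occursAt_iterate [Nonempty A] {u : List A} {x : ℕ → A} {n i : ℕ} :
    occursAt u (shift^[n] x) i ↔ occursAt u x (n + i) := by
  have d : A := Classical.arbitrary A
  rw [occursAt_iff d, occursAt_iff d]
  constructor <;> intro h j hj <;> have := h j hj <;>
    simpa [shift_iterate, Nat.add_assoc] using this

lemma occursAt_shift [Nonempty A] {u : List A} {x : ℕ → A} {i : ℕ} :
    occursAt u (shift x) i ↔ occursAt u x (1 + i) := by
  have : shift x = shift^[1] x := by simp
  rw [this, occursAt_iterate]

variable [TopologicalSpace A] [DiscreteTopology A]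

omit [DiscreteTopology A] in
lemma continuous_shift : Continuous (shift (A := A)) :=
  continuous_pi fun n => continuous_apply (n + 1)

lemma isClopen_occ [Nonempty A] (u : List A) (i : ℕ) :
    IsClopen {x : ℕ → A | occursAt u x i} := by
  have d : A := Classical.arbitrary A
  have : {x : ℕ → A | occursAt u x i} =
      ⋂ j ∈ Finset.range u.length, (fun x : ℕ → A => x (i + j)) ⁻¹' {u.getD j d} := by
    ext x
    simp [occursAt_iff d, eq_comm]
  rw [this]
  apply Set.Finite.isClopen_biInter (Finset.finite_toSet _)
  intro j _
  exact (isClopen_discrete _).preimage (continuous_apply _)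

end Stmt4Aux

/-- `V` is uniformly recurrent: every factor of `V` occurs in every
sufficiently long factor of `V`. -/
def UnifRec {A : Type*} (V : ℕ → A) : Prop :=
  ∀ u : List A, FactorOf u V → ∃ N : ℕ, ∀ v : List A,
    FactorOf v V → v.length = N → u <:+: v

open Stmt4Aux

/-- Every infinite word has a uniformly recurrent word all of whose factors
are factors of it. -/
theorem stmt4 {A : Type*} [Fintype A] [Nonempty A] (W : ℕ → A) :
    ∃ V : ℕ → A, UnifRec V ∧ ∀ u : List A, FactorOf u V → FactorOf u W := by
  classical
  letI : TopologicalSpace A := ⊥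
  haveI : DiscreteTopology A := ⟨rfl⟩
  have d : A := Classical.arbitrary A
  have hfac_def : ∀ (u : List A) (x : ℕ → A), FactorOf u x ↔ ∃ i, occursAt u x i :=
    fun u x => Iff.rfl
  set Ω : Set (ℕ → A) := closure (Set.range fun n => shift^[n] W) with hΩdef
  have hΩclosed : IsClosed Ω := isClosed_closure
  have hWΩ : W ∈ Ω := subset_closure ⟨0, by simp⟩
  have hΩinv : shift '' Ω ⊆ Ω := by
    have h1 : shift '' (Set.range fun n => shift^[n] W) ⊆
        Set.range fun n => shift^[n] W := by
      rintro _ ⟨_, ⟨n, rfl⟩, rfl⟩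
      exact ⟨n + 1, Function.iterate_succ_apply' _ _ _⟩
    calc shift '' Ω ⊆ closure (shift '' (Set.range fun n => shift^[n] W)) :=
          image_closure_subset_closure_image continuous_shift
      _ ⊆ Ω := closure_mono h1
  set S : Set (Set (ℕ → A)) :=
    {K | K.Nonempty ∧ IsClosed K ∧ K ⊆ Ω ∧ shift '' K ⊆ K} with hSdef
  have hΩS : Ω ∈ S := ⟨⟨W, hWΩ⟩, hΩclosed, subset_rfl, hΩinv⟩
  have hzorn : ∀ c ⊆ S, IsChain (· ⊆ ·) c → c.Nonempty →
      ∃ lb ∈ S, ∀ s ∈ c, lb ⊆ s := by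
    intro c hcS hchain hcne
    haveI : Nonempty c := hcne.to_subtype
    refine ⟨⋂₀ c, ⟨?_, ?_, ?_, ?_⟩, fun s hs => Set.sInter_subset_of_mem hs⟩
    · have : (⋂ s : c, (s : Set (ℕ → A))).Nonempty := by
        apply IsCompact.nonempty_iInter_of_directed_nonempty_isCompact_isClosed
        · intro s t
          rcases eq_or_ne s.1 t.1 with h | h
          · exact ⟨s, subset_rfl, h ▸ subset_rfl⟩
          · rcases hchain s.2 t.2 h with h' | h'
            · exact ⟨s, subset_rfl, h'⟩
            · exact ⟨t, h', subset_rfl⟩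
        · exact fun s => (hcS s.2).1
        · exact fun s => (hcS s.2).2.1.isCompact
        · exact fun s => (hcS s.2).2.1
      rwa [Set.sInter_eq_iInter]
    · exact isClosed_sInter fun s hs => (hcS hs).2.1
    · obtain ⟨s, hs⟩ := hcne
      exact (Set.sInter_subset_of_mem hs).trans (hcS hs).2.2.1
    · rintro _ ⟨x, hx, rfl⟩ s hs
      exact (hcS hs).2.2.2 ⟨x, hx s hs, rfl⟩
  obtain ⟨K, -, ⟨hKne, hKcl, hKΩ, hKinv⟩, hKmin⟩ := zorn_superset_nonempty S hzorn Ω hΩS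
  obtain ⟨V, hV⟩ := hKne
  have hKiter : ∀ (n : ℕ) (x), x ∈ K → shift^[n] x ∈ K := by
    intro n
    induction n with
    | zero => simp
    | succ n ih =>
      intro x hx
      rw [Function.iterate_succ_apply]
      exact ih _ (hKinv ⟨x, hx, rfl⟩)
  refine ⟨V, ?_, ?_⟩
  · -- uniform recurrence
    intro u hu
    obtain ⟨i0, hi0⟩ := hu
    have hall : ∀ x ∈ K, ∃ i, occursAt u x i := by
      by_contra h
      push_neg at h
      obtain ⟨x0, hx0K, hx0⟩ := h
      set F : Set (ℕ → A) := K ∩ ⋂ i, {x | occursAt u x i}ᶜ with hFdef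
      have hFS : F ∈ S := by
        refine ⟨⟨x0, hx0K, by simpa using hx0⟩,
          hKcl.inter (isClosed_iInter fun i =>
            (isClopen_occ u i).isOpen.isClosed_compl), ?_, ?_⟩
        · exact Set.inter_subset_left.trans hKΩ
        · rintro _ ⟨x, ⟨hxK, hxno⟩, rfl⟩
          simp only [Set.mem_iInter, Set.mem_compl_iff, Set.mem_setOf_eq] at hxno
          refine ⟨hKinv ⟨x, hxK, rfl⟩, ?_⟩
          simp only [Set.mem_iInter, Set.mem_compl_iff, Set.mem_setOf_eq]
          intro i hocc
          exact hxno (1 + i) (occursAt_shift.mp hocc)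
      have hKF : K ⊆ F := hKmin hFS Set.inter_subset_left
      have := hKF hV
      simp only [hFdef, Set.mem_inter_iff, Set.mem_iInter, Set.mem_compl_iff,
        Set.mem_setOf_eq] at this
      exact this.2 i0 hi0
    have hKcpt : IsCompact K := hKcl.isCompact
    have hcover : K ⊆ ⋃ i : ℕ, {x | occursAt u x i} :=
      fun x hx => Set.mem_iUnion.mpr (hall x hx)
    obtain ⟨t, ht⟩ := hKcpt.elim_finite_subcover _
      (fun i => (isClopen_occ u i).isOpen) hcover
    set M := t.sup id with hMdef
    have hallM : ∀ x ∈ K, ∃ i ≤ M, occursAt u x i := by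
      intro x hx
      obtain ⟨i, hi, hocc⟩ := Set.mem_iUnion₂.mp (ht hx)
      exact ⟨i, Finset.le_sup (f := id) hi, hocc⟩
    refine ⟨M + u.length, ?_⟩
    rintro v ⟨p, hp⟩ hvlen
    obtain ⟨i, hiM, hocc⟩ := hallM _ (hKiter p V hV)
    rw [occursAt_iterate] at hocc
    have hlen : i + u.length ≤ v.length := by omega
    have hueq : u = (v.drop i).take u.length := by
      apply List.ext_getElem
      · simp; omega
      · intro j h1 h2
        have hvj : ∀ k < v.length, v.getD k d = V (p + k) :=
          (occursAt_iff d).mp hp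
        have huj : ∀ k < u.length, u.getD k d = V (p + i + k) :=
          (occursAt_iff d).mp hocc
        have e1 : u[j] = V (p + i + j) := by
          have := huj j h1
          rwa [List.getD_eq_getElem _ _ h1] at this
        have e2 : v[i + j] = V (p + (i + j)) := by
          have h3 : i + j < v.length := by omega
          have := hvj (i + j) h3
          rwa [List.getD_eq_getElem _ _ h3] at this
        rw [e1]
        simp only [List.getElem_take, List.getElem_drop]
        rw [e2]
        ring_nf
    rw [hueq]
    exact ((v.drop i).take_prefix u.length).isInfix.trans (v.drop_suffix i).isInfix
  · -- factors of V are factors of W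
    rintro u ⟨i, hi⟩
    set p : List A := (List.range (i + u.length)).map V with hpdef
    have hplen : p.length = i + u.length := by simp [hpdef]
    have hpV : occursAt p V 0 := by
      rw [occursAt_iff d]
      intro j hj
      rw [hplen] at hj
      simp [hpdef, List.getD_eq_getElem?_getD, hj]
    have hVcl : V ∈ Ω := hKΩ hV
    obtain ⟨_, hy, n, rfl⟩ := mem_closure_iff.mp hVcl _ (isClopen_occ p 0).isOpen hpV
    have hpW : occursAt p W n := by
      have := occursAt_iterate.mp hy
      simpa using this
    refine ⟨n + i, (occursAt_iff d).mpr ?_⟩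
    intro j hj
    have h1 : u.getD j d = V (i + j) := (occursAt_iff d).mp hi j hj
    have h2 : p.getD (i + j) d = W (n + (i + j)) := by
      have := (occursAt_iff d).mp hpW (i + j) (by omega)
      rwa [hplen] at *
    have h3 : p.getD (i + j) d = V (i + j) := by
      simp [hpdef, List.getD_eq_getElem?_getD, show i + j < i + u.length by omega]
    rw [h1, ← h3, h2]
    ring_nf
end

section
/- Let α be irrational and consider the rotation T(x) = {x+α} on [0,1) coded by U = [0,1/2). If two infinite binary sequences w and v are both essential evolutions of the same starting point x₀ (i.e., each finite prefix is the common coding of some open set of points arbitrarily close to x₀), then the mismatch density ρ(w,v) = lim_{N→∞}(1/N)#{n<N : w_n ≠ v_n} exists and equals 0. -/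
open Filter

/-- `u` is an essential finite evolution of `x₀` for the system `(f, U)`:
every neighborhood of `x₀` contains a nonempty open set on which every point
has coding prefix `u`. -/
def EssFinEvol {X : Type*} [TopologicalSpace X] (f : X → X) (U : Set X)
    (u : List Bool) (x₀ : X) : Prop :=
  ∀ O ∈ nhds x₀, ∃ V : Set X, V ⊆ O ∧ IsOpen V ∧ V.Nonempty ∧
    ∀ x ∈ V, ∀ n : Fin u.length, (u.get n = true ↔ f^[(n : ℕ)] x ∈ U)

/-- `w` is an essential (infinite) evolution of `x₀`: every prefix of `w` is an
essential finite evolution of `x₀`. -/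
def EssEvol {X : Type*} [TopologicalSpace X] (f : X → X) (U : Set X)
    (w : ℕ → Bool) (x₀ : X) : Prop :=
  ∀ L : ℕ, EssFinEvol f U (List.ofFn fun i : Fin L => w i) x₀

/-- Two essential evolutions of the same point of an irrational rotation coded
by `[0, 1/2)` have mismatch density zero. -/
theorem stmt7 (α : ℝ) (hα : Irrational α)
    (f : UnitAddCircle → UnitAddCircle) (hf : ∀ x, f x = x + (α : UnitAddCircle))
    (U : Set UnitAddCircle)
    (hU : U = (fun r : ℝ => (r : UnitAddCircle)) '' Set.Ico 0 (1 / 2))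
    (x₀ : UnitAddCircle) (w v : ℕ → Bool)
    (hw : EssEvol f U w x₀) (hv : EssEvol f U v x₀) :
    Tendsto
      (fun N : ℕ =>
        (((Finset.range N).filter fun n => w n ≠ v n).card : ℝ) / N)
      atTop (nhds 0) := by
  -- iterates of f
  have hiter : ∀ (n : ℕ) (x : UnitAddCircle), f^[n] x = x + n • ((α : ℝ) : UnitAddCircle) := by
    intro n
    induction n with
    | zero => simp
    | succ n ih =>
      intro x
      rw [Function.iterate_succ_apply', ih, hf, succ_nsmul, ← add_assoc]
  -- injectivity of the orbit
  have hinj : ∀ a b : ℕ, x₀ + a • ((α : ℝ) : UnitAddCircle) = x₀ + b • ((α : ℝ) : UnitAddCircle) → a = b := by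
    intro a b hab
    by_contra hne
    have h2 : ((a • α : ℝ) : UnitAddCircle) = ((b • α : ℝ) : UnitAddCircle) := by
      have := add_left_cancel hab
      rwa [← QuotientAddGroup.mk_nsmul, ← QuotientAddGroup.mk_nsmul] at this
    have h3 : ((a • α - b • α : ℝ) : UnitAddCircle) = 0 := by
      rw [← sub_eq_zero] at h2
      simpa using h2
    obtain ⟨k, hk⟩ := (AddCircle.coe_eq_zero_iff (1:ℝ)).mp h3
    have hd : ((a : ℤ) - b) ≠ 0 := by
      simpa [sub_eq_zero] using hne
    have : Irrational (((a : ℤ) - b : ℤ) * α) := hα.intCast_mul hd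
    apply this.ne_int k
    rw [zsmul_eq_mul, mul_one] at hk
    rw [nsmul_eq_mul, nsmul_eq_mul] at hk
    push_cast
    linear_combination -hk
  -- coding extraction
  have hcode : ∀ (u : ℕ → Bool), EssEvol f U u x₀ → ∀ n : ℕ, ∀ W : Set UnitAddCircle,
      IsOpen W → (x₀ + n • ((α : ℝ) : UnitAddCircle)) ∈ W →
      ∃ x : UnitAddCircle, (x + n • ((α : ℝ) : UnitAddCircle)) ∈ W ∧
        (u n = true ↔ x + n • ((α : ℝ) : UnitAddCircle) ∈ U) := by
    intro u hu n W hW hyW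
    have hcont : Continuous (fun x : UnitAddCircle => x + n • ((α : ℝ) : UnitAddCircle)) :=
      continuous_id.add continuous_const
    have hO : (fun x : UnitAddCircle => x + n • ((α : ℝ) : UnitAddCircle)) ⁻¹' W ∈ nhds x₀ :=
      hcont.continuousAt.preimage_mem_nhds (hW.mem_nhds hyW)
    obtain ⟨V, hVO, hVopen, ⟨x, hxV⟩, hc⟩ := hu (n+1) _ hO
    refine ⟨x, hVO hxV, ?_⟩
    have := hc x hxV ⟨n, by simp⟩
    rw [List.get_ofFn] at this
    simpa [hiter n x] using this
  -- frontier cases: agreement off the boundary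
  have hagree : ∀ n : ℕ, x₀ + n • ((α : ℝ) : UnitAddCircle) ≠ ((0:ℝ) : UnitAddCircle) →
      x₀ + n • ((α : ℝ) : UnitAddCircle) ≠ ((1/2 : ℝ) : UnitAddCircle) → w n = v n := by
    intro n h0 h12
    set y := x₀ + n • ((α : ℝ) : UnitAddCircle) with hy
    obtain ⟨r, hr⟩ : ∃ r : Set.Ico (0:ℝ) (0+1), ((r : ℝ) : UnitAddCircle) = y :=
      ⟨AddCircle.equivIco 1 0 y, (AddCircle.equivIco 1 0).symm_apply_apply y⟩
    have hr0 : (r : ℝ) ≠ 0 := fun h => h0 (by rw [← hr, h])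
    have hr12 : (r : ℝ) ≠ 1/2 := fun h => h12 (by rw [← hr, h])
    have hmem := r.2
    simp only [zero_add] at hmem
    have hopen : IsOpenMap ((↑) : ℝ → UnitAddCircle) := QuotientAddGroup.isOpenMap_coe
    rcases lt_or_gt_of_ne hr12 with hlt | hgt
    · -- r ∈ Ioo 0 (1/2), W ⊆ U
      set W : Set UnitAddCircle := ((↑) : ℝ → UnitAddCircle) '' Set.Ioo 0 (1/2) with hWdef
      have hWopen : IsOpen W := hopen _ isOpen_Ioo
      have hyW : y ∈ W := ⟨r, ⟨lt_of_le_of_ne hmem.1 (Ne.symm hr0), hlt⟩, hr⟩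
      have hWU : W ⊆ U := by
        rw [hU]
        exact Set.image_mono Set.Ioo_subset_Ico_self
      obtain ⟨x, hxW, hxc⟩ := hcode w hw n W hWopen hyW
      obtain ⟨x', hxW', hxc'⟩ := hcode v hv n W hWopen hyW
      rw [hxc.mpr (hWU hxW), hxc'.mpr (hWU hxW')]
    · -- r ∈ Ioo (1/2) 1, W disjoint from U
      set W : Set UnitAddCircle := ((↑) : ℝ → UnitAddCircle) '' Set.Ioo (1/2) 1 with hWdef
      have hWopen : IsOpen W := hopen _ isOpen_Ioo
      have hyW : y ∈ W := ⟨r, ⟨hgt, hmem.2⟩, hr⟩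
      have hWU : ∀ z ∈ W, z ∉ U := by
        rintro z ⟨s, hs, rfl⟩ hzU
        rw [hU] at hzU
        obtain ⟨t, ht, hts⟩ := hzU
        have : ((t - s : ℝ) : UnitAddCircle) = 0 := by
          rw [← sub_eq_zero] at hts
          simpa using hts
        obtain ⟨k, hk⟩ := (AddCircle.coe_eq_zero_iff (1:ℝ)).mp this
        rw [zsmul_eq_mul, mul_one] at hk
        have h1 : (k:ℝ) < 0 := by rw [hk]; linarith [hs.1, hs.2, ht.1, ht.2]
        have h2 : (-1:ℝ) < k := by rw [hk]; linarith [hs.1, hs.2, ht.1, ht.2]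
        have h1' : (k:ℤ) < 0 := by exact_mod_cast h1
        have h2' : (-1:ℤ) < k := by exact_mod_cast h2
        omega
      obtain ⟨x, hxW, hxc⟩ := hcode w hw n W hWopen hyW
      obtain ⟨x', hxW', hxc'⟩ := hcode v hv n W hWopen hyW
      have h1 : w n = false := by
        cases hwn : w n
        · rfl
        · exact absurd (hxc.mp hwn) (hWU _ hxW)
      have h2 : v n = false := by
        cases hvn : v n
        · rfl
        · exact absurd (hxc'.mp hvn) (hWU _ hxW')
      rw [h1, h2]
  -- counting: mismatch set has at most 2 elements
  have hcard : ∀ N : ℕ, (((Finset.range N).filter fun n => w n ≠ v n).card : ℝ) ≤ 2 := by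
    intro N
    have hsub : ((Finset.range N).filter fun n => w n ≠ v n) ⊆
        ((Finset.range N).filter fun n => x₀ + n • ((α : ℝ) : UnitAddCircle) = ((0:ℝ) : UnitAddCircle)) ∪
        ((Finset.range N).filter fun n => x₀ + n • ((α : ℝ) : UnitAddCircle) = ((1/2:ℝ) : UnitAddCircle)) := by
      intro n hn
      simp only [Finset.mem_filter, Finset.mem_range] at hn
      simp only [Finset.mem_union, Finset.mem_filter, Finset.mem_range]
      by_contra hc
      push_neg at hc
      exact hn.2 (hagree n (hc.1 hn.1) (hc.2 hn.1))
    have c1 : ∀ (c : UnitAddCircle),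
        ((Finset.range N).filter fun n => x₀ + n • ((α : ℝ) : UnitAddCircle) = c).card ≤ 1 := by
      intro c
      apply Finset.card_le_one.mpr
      intro a ha b hb
      simp only [Finset.mem_filter] at ha hb
      exact hinj a b (ha.2.trans hb.2.symm)
    have h2 : ((Finset.range N).filter fun n => w n ≠ v n).card ≤ 2 := by
      refine (Finset.card_le_card hsub).trans ?_
      refine (Finset.card_union_le _ _).trans ?_
      have h1 := c1 (((0:ℝ) : UnitAddCircle))
      have h2 := c1 (((1/2:ℝ) : UnitAddCircle))
      omega
    exact_mod_cast h2
  -- squeeze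
  apply squeeze_zero (fun N => by positivity) (g := fun N : ℕ => 2 / (N : ℝ))
  · intro N
    simp only [div_eq_mul_inv]
    exact mul_le_mul_of_nonneg_right (hcard N) (by positivity)
  · exact tendsto_const_div_atTop_nhds_zero_nat 2
end

section
/- If W is a uniformly recurrent infinite word that is not eventually periodic, then there exist arbitrarily long finite words that are right special factors of W; in particular there exist two distinct uniformly recurrent right-infinite words V₁ ≠ V₂, both with the same factor set as W, which share a common arbitrarily long prefix structure (i.e., for each n there is a factor u of length n with two distinct right extensions). -/
/-- A uniformly recurrent, not eventually periodic word has arbitrarily long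
right special factors. -/
theorem stmt10 {A : Type*} [Fintype A] (W : ℕ → A)
    (hur : UnifRec W)
    (hnp : ¬ ∃ N p : ℕ, 0 < p ∧ ∀ n ≥ N, W (n + p) = W n) :
    ∀ n : ℕ, ∃ u : List A, FactorOf u W ∧ n ≤ u.length ∧
      ∃ a b : A, a ≠ b ∧ FactorOf (u ++ [a]) W ∧ FactorOf (u ++ [b]) W := by
  intro n
  by_contra h
  push_neg at h
  apply hnp
  -- Key: equal length-n windows force equal next letters.
  have key : ∀ i j : ℕ, (∀ k < n, W (i + k) = W (j + k)) → W (i + n) = W (j + n) := by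
    intro i j hij
    by_contra hne
    set u : List A := (List.range n).map fun k => W (i + k) with hu
    have hlen : u.length = n := by simp [hu]
    have hueq : u = (List.range n).map fun k => W (j + k) := by
      apply List.map_congr_left
      intro k hk
      exact hij k (List.mem_range.mp hk)
    have hfac : FactorOf u W := ⟨i, by simp [hu]⟩
    have hfa : FactorOf (u ++ [W (i + n)]) W := by
      refine ⟨i, ?_⟩
      simp [hu, List.range_succ]
    have hfb : FactorOf (u ++ [W (j + n)]) W := by
      refine ⟨j, ?_⟩
      rw [hueq]
      simp [List.range_succ]
    exact h u hfac (le_of_eq hlen.symm) (W (i + n)) (W (j + n)) hne hfa hfb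
  -- From equal windows at two positions, deduce eventual periodicity.
  have main : ∀ i j : ℕ, i < j →
      ((fun k : Fin n => W (i + k)) = fun k : Fin n => W (j + k)) →
      ∃ N p : ℕ, 0 < p ∧ ∀ m ≥ N, W (m + p) = W m := by
    intro i j hlt hfij
    have hall : ∀ k : ℕ, W (i + k) = W (j + k) := by
      intro k
      induction k using Nat.strong_induction_on with
      | _ k ih =>
        by_cases hk : k < n
        · exact congrFun hfij ⟨k, hk⟩
        · have hkn : n ≤ k := le_of_not_gt hk
          have := key (i + (k - n)) (j + (k - n)) (fun m hm => by
            have h1 := ih (k - n + m) (by omega)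
            rw [show i + (k - n) + m = i + (k - n + m) by omega,
              show j + (k - n) + m = j + (k - n + m) by omega]
            exact h1)
          rw [show i + (k - n) + n = i + k by omega,
            show j + (k - n) + n = j + k by omega] at this
          exact this
    refine ⟨i, j - i, by omega, fun m hm => ?_⟩
    have := hall (m - i)
    rw [show m + (j - i) = j + (m - i) by omega]
    rw [← this, show i + (m - i) = m by omega]
  -- Two positions with the same length-n window.
  obtain ⟨i₀, j₀, hne, hfij⟩ :=
    Finite.exists_ne_map_eq_of_infinite (fun i : ℕ => fun k : Fin n => W (i + k))
  rcases lt_or_gt_of_ne hne with hlt | hlt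
  · exact main i₀ j₀ hlt hfij
  · exact main j₀ i₀ hlt hfij.symm
end

section
/- Consider the unipotent torus map f(x₁,...,x_m) = (x₁+ε, x₂+x₁, ..., x_m+x_{m-1}) mod 1 with ε irrational, and the coding set U = {x : 0 ≤ x_m < 1/2}. If U is irreducible, then distinct points of the torus have distinct essential evolutions, and for every δ > 0 there exists N(δ) such that any two points at distance greater than δ have distinct evolutions already within the first N(δ) symbols. -/
/-- `U` is irreducible: its closure is not the preimage of a closed set under
any nontrivial epimorphism of dynamics. -/
def IrredSet {M : Type} [TopologicalSpace M] (f : M → M) (U : Set M) : Prop :=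
  ¬ ∃ (M' : Type) (_ : TopologicalSpace M') (g : M → M') (f' : M' → M'),
      Continuous g ∧ Function.Surjective g ∧ ¬ Function.Injective g ∧
        Continuous f' ∧ g ∘ f = f' ∘ g ∧
        ∃ S : Set M', IsClosed S ∧ g ⁻¹' S = closure U

open Filter Topology Set Polynomial

section Generic

variable {X : Type*} [TopologicalSpace X] (f : X → X) (U : Set X)

/-- A cleaner reformulation of essential finite evolutions. -/
def GoodCode (L : ℕ) (w : ℕ → Bool) (x : X) : Prop :=
  ∀ O ∈ nhds x, ∃ V : Set X, V ⊆ O ∧ IsOpen V ∧ V.Nonempty ∧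
    ∀ z ∈ V, ∀ n, n < L → (w n = true ↔ f^[n] z ∈ U)

theorem essEvol_iff {w : ℕ → Bool} {x : X} :
    EssEvol f U w x ↔ ∀ L, GoodCode f U L w x := by
  constructor
  · intro h L O hO
    obtain ⟨V, hVO, hVop, hVne, hcode⟩ := h L O hO
    refine ⟨V, hVO, hVop, hVne, fun z hz n hn => ?_⟩
    have := hcode z hz ⟨n, by simpa using hn⟩
    simpa using this
  · intro h L O hO
    obtain ⟨V, hVO, hVop, hVne, hcode⟩ := h L O hO
    refine ⟨V, hVO, hVop, hVne, fun z hz n => ?_⟩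
    have hn : (n : ℕ) < L := by simpa using n.isLt
    have := hcode z hz n hn
    simpa using this

theorem essEvol_shift {w : ℕ → Bool} {x : X} (hfc : Continuous f) (hfo : IsOpenMap f)
    (h : EssEvol f U w x) : EssEvol f U (fun n => w (n + 1)) (f x) := by
  rw [essEvol_iff] at h ⊢
  intro L O hO
  obtain ⟨V, hVO, hVop, hVne, hcode⟩ := h (L + 1) (f ⁻¹' O) (hfc.continuousAt.preimage_mem_nhds hO)
  refine ⟨f '' V, ?_, hfo V hVop, hVne.image f, ?_⟩
  · rintro z ⟨v, hv, rfl⟩; exact hVO hv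
  · rintro z ⟨v, hv, rfl⟩ n hn
    have := hcode v hv (n + 1) (by omega)
    simpa [Function.iterate_succ_apply, Function.iterate_succ_apply'] using this

theorem essEvol_iterate {w : ℕ → Bool} {x : X} (hfc : Continuous f) (hfo : IsOpenMap f)
    (h : EssEvol f U w x) (K : ℕ) : EssEvol f U (fun n => w (n + K)) (f^[K] x) := by
  induction K with
  | zero => simpa using h
  | succ K ih =>
      have h2 := essEvol_shift f U hfc hfo ih
      rw [Function.iterate_succ_apply']
      have h3 : (fun n => w (n + (K + 1))) = (fun n => w ((n + 1) + K)) := by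
        funext n; congr 1; omega
      rw [h3]; exact h2

theorem goodCode_closure {w : ℕ → Bool} {x : X} (hfc : Continuous f)
    (h : ∀ L, GoodCode f U L w x) (n : ℕ) :
    f^[n] x ∈ closure (if w n then U else Uᶜ) := by
  rw [mem_closure_iff_nhds]
  intro W hW
  have hO : (f^[n]) ⁻¹' W ∈ nhds x :=
    ((hfc.iterate n).continuousAt).preimage_mem_nhds hW
  obtain ⟨V, hVO, hVop, hVne, hcode⟩ := h (n + 1) _ hO
  obtain ⟨z, hz⟩ := hVne
  have hcz := hcode z hz n (by omega)
  refine ⟨f^[n] z, hVO hz, ?_⟩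
  cases hwn : w n with
  | true => simpa [hwn] using (hcz.mp (by simp [hwn]))
  | false =>
      simp only [hwn, if_neg Bool.false_ne_true]
      intro hUz
      simp [hwn] at hcz
      exact hcz hUz

theorem goodCode_isClosed :
    IsClosed {p : (ℕ → Bool) × X | ∀ L, GoodCode f U L p.1 p.2} := by
  rw [← isOpen_compl_iff, isOpen_iff_mem_nhds]
  rintro ⟨w, x⟩ hp
  simp only [mem_compl_iff, mem_setOf_eq, not_forall] at hp
  obtain ⟨L, hL⟩ := hp
  simp only [GoodCode, not_forall] at hL
  obtain ⟨O, hO, hfail⟩ := hL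
  set W : Set ((ℕ → Bool) × X) := {w' | ∀ n, n < L → w' n = w n} ×ˢ interior O with hWdef
  have hWopen : IsOpen W := by
    apply IsOpen.prod _ isOpen_interior
    have h1 : {w' : ℕ → Bool | ∀ n, n < L → w' n = w n} =
        ⋂ n ∈ Finset.range L, {w' : ℕ → Bool | w' n = w n} := by
      ext w'; simp
    rw [h1]
    apply isOpen_biInter_finset
    intro n _
    have h2 : {w' : ℕ → Bool | w' n = w n} = (fun w' : ℕ → Bool => w' n) ⁻¹' {w n} := rfl
    rw [h2]
    exact (continuous_apply n).isOpen_preimage _ (isOpen_discrete _)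
  refine mem_nhds_iff.mpr ⟨W, ?_, hWopen, ?_⟩
  · rintro ⟨w', x'⟩ ⟨hw', hx'⟩
    simp only [mem_compl_iff, mem_setOf_eq, not_forall]
    refine ⟨L, ?_⟩
    intro hgood
    obtain ⟨V, hVO, hVop, hVne, hcode⟩ := hgood (interior O) (isOpen_interior.mem_nhds hx')
    apply hfail
    refine ⟨V, hVO.trans interior_subset, hVop, hVne, fun z hz n hn => ?_⟩
    rw [← hw' n hn]
    exact hcode z hz n hn
  · exact ⟨fun n hn => rfl, mem_interior_iff_mem_nhds.mpr hO⟩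

theorem irred_no_pair {M : Type} [TopologicalSpace M] {f : M → M} (hfc : Continuous f)
    {U : Set M} (hirr : IrredSet f U) {p q : M} (hne : p ≠ q)
    (hsat : ∀ n : ℕ, (f^[n] p ∈ closure U ↔ f^[n] q ∈ closure U)) : False := by
  apply hirr
  set r : M → M → Prop := fun a b => ∃ n : ℕ, a = f^[n] p ∧ b = f^[n] q with hr
  have hrstep : ∀ a b, r a b → r (f a) (f b) := by
    rintro a b ⟨n, rfl, rfl⟩
    exact ⟨n + 1, by rw [Function.iterate_succ_apply'], by rw [Function.iterate_succ_apply']⟩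
  have hsat' : ∀ a b, Relation.EqvGen r a b → (a ∈ closure U ↔ b ∈ closure U) := by
    intro a b h
    induction h with
    | rel a b hab => obtain ⟨n, rfl, rfl⟩ := hab; exact hsat n
    | refl a => exact Iff.rfl
    | symm a b _ ih => exact ih.symm
    | trans a b c _ _ ih1 ih2 => exact ih1.trans ih2
  refine ⟨Quot r, inferInstance, Quot.mk r, Quot.map f hrstep, continuous_quot_mk, ?_, ?_, ?_, ?_, ?_⟩
  · exact Quot.mk_surjective
  · intro hinj
    exact hne (hinj (Quot.sound ⟨0, rfl, rfl⟩))
  · rw [isQuotientMap_quot_mk.continuous_iff]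
    exact continuous_quot_mk.comp hfc
  · rfl
  · refine ⟨Quot.mk r '' closure U, ?_, ?_⟩
    all_goals {
      have hpre : (Quot.mk r) ⁻¹' (Quot.mk r '' closure U) = closure U := by
        ext a
        simp only [mem_preimage, mem_image]
        constructor
        · rintro ⟨b, hb, hba⟩
          exact (hsat' b a (Quot.eqvGen_exact hba)).mp hb
        · exact fun ha => ⟨a, ha, rfl⟩
      first
      | exact isQuotientMap_quot_mk.isClosed_preimage.mp (by rw [hpre]; exact isClosed_closure)
      | exact hpre
    }

end Generic

section Arcs

theorem closure_arc {r s : ℝ} (h : r < s) :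
    closure ((fun t : ℝ => (t : UnitAddCircle)) '' Ico r s)
      = (fun t : ℝ => (t : UnitAddCircle)) '' Icc r s := by
  have hcont : Continuous (fun t : ℝ => (t : UnitAddCircle)) := AddCircle.continuous_mk' 1
  apply subset_antisymm
  · apply closure_minimal (image_mono Ico_subset_Icc_self)
    exact (isCompact_Icc.image hcont).isClosed
  · rw [← closure_Ico h.ne]
    exact (image_closure_subset_closure_image hcont)

theorem compl_arc :
    ((fun t : ℝ => (t : UnitAddCircle)) '' Ico 0 (1/2))ᶜ
      = (fun t : ℝ => (t : UnitAddCircle)) '' Ico (1/2) 1 := by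
  ext z
  obtain ⟨b, hb, rfl⟩ := AddCircle.eq_coe_Ico z
  have hmem : ∀ t : ℝ, t ∈ Ico (0:ℝ) 1 → ((t : UnitAddCircle) = (b : ℝ) ↔ t = b) := by
    intro t ht
    exact AddCircle.coe_eq_coe_iff_of_mem_Ico (by rw [zero_add]; exact ht)
      (by rw [zero_add]; exact hb)
  constructor
  · intro hz
    simp only [mem_compl_iff, mem_image, not_exists] at hz
    refine ⟨b, ⟨?_, hb.2⟩, rfl⟩
    by_contra hlt
    push_neg at hlt
    exact hz b ⟨⟨hb.1, hlt⟩, rfl⟩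
  · rintro ⟨t, ht, htz⟩
    have : t = b := (hmem t ⟨by linarith [ht.1], ht.2⟩).mp htz
    subst this
    rintro ⟨t', ht', ht'z⟩
    have : t' = t := (hmem t' ⟨ht'.1, by linarith [ht'.2]⟩).mp ht'z
    subst this
    linarith [ht.1, ht'.2]

theorem arcs_inter {z : UnitAddCircle}
    (h1 : z ∈ (fun t : ℝ => (t : UnitAddCircle)) '' Icc 0 (1/2))
    (h2 : z ∈ (fun t : ℝ => (t : UnitAddCircle)) '' Icc (1/2) 1) :
    z = ((0 : ℝ) : UnitAddCircle) ∨ z = ((1/2 : ℝ) : UnitAddCircle) := by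
  obtain ⟨a, ha, rfl⟩ := h1
  obtain ⟨b, hb, hba⟩ := h2
  have hsub : (b : ℝ) - a ∈ AddSubgroup.zmultiples (1:ℝ) := by
    rw [QuotientAddGroup.eq_iff_sub_mem] at hba
    exact hba
  rw [AddSubgroup.mem_zmultiples_iff] at hsub
  obtain ⟨k, hk⟩ := hsub
  rw [zsmul_eq_mul, mul_one] at hk
  have hk01 : (k:ℝ) = 0 ∨ (k:ℝ) = 1 := by
    have h0 : (0:ℝ) ≤ (k:ℝ) := by linarith [ha.1, ha.2, hb.1, hb.2]
    have h1' : (k:ℝ) ≤ 1 := by linarith [ha.1, ha.2, hb.1, hb.2]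
    have hk' : k = 0 ∨ k = 1 := by
      have hz0 : (0:ℤ) ≤ k := by exact_mod_cast h0
      have hz1 : k ≤ 1 := by exact_mod_cast h1'
      omega
    rcases hk' with h | h <;> simp [h]
  rcases hk01 with h | h
  · right
    have hab : a = b := by linarith
    have : a = 1/2 := le_antisymm ha.2 (by rw [hab]; exact hb.1)
    rw [this]
  · left
    have : a = 0 := by linarith [ha.1, hb.2]
    rw [this]

theorem poly_hits {m : ℕ} {ε : ℝ} (hε : Irrational ε) (a : ℕ → ℝ) (ha : a m = ε) :
    {n : ℕ | ∃ c : ℝ, (c = 0 ∨ c = 1/2) ∧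
      ((∑ j ∈ Finset.range (m+1), (n.choose j : ℝ) * a j : ℝ) : UnitAddCircle)
        = (c : UnitAddCircle)}.Finite := by
  by_contra hinf
  have hinf' : {n : ℕ | ∃ c : ℝ, (c = 0 ∨ c = 1/2) ∧
      ((∑ j ∈ Finset.range (m+1), (n.choose j : ℝ) * a j : ℝ) : UnitAddCircle)
        = (c : UnitAddCircle)}.Infinite := hinf
  obtain ⟨t, hts', htc⟩ := hinf'.exists_subset_card_eq (m+1)
  have hts : (t : Set ℕ) ⊆ _ := hts'
  have key : ∀ n ∈ t, ∃ q : ℚ,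
      (∑ j ∈ Finset.range (m+1), (n.choose j : ℝ) * a j) = (q : ℝ) := by
    intro n hn
    obtain ⟨c, hc, hcc⟩ := hts hn
    rw [QuotientAddGroup.eq_iff_sub_mem, AddSubgroup.mem_zmultiples_iff] at hcc
    obtain ⟨k, hk⟩ := hcc
    rw [zsmul_eq_mul, mul_one] at hk
    rcases hc with rfl | rfl
    · exact ⟨k, by push_cast; linarith⟩
    · exact ⟨(1:ℚ)/2 + k, by push_cast; linarith⟩
  set v : ℕ → ℚ := fun n => if h : n ∈ t then Classical.choose (key n h) else 0 with hv
  have hvspec : ∀ n ∈ t,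
      (∑ j ∈ Finset.range (m+1), (n.choose j : ℝ) * a j) = ((v n : ℚ) : ℝ) := by
    intro n hn
    simp only [hv, dif_pos hn]
    exact Classical.choose_spec (key n hn)
  set Q : ℝ[X] := ∑ j ∈ Finset.range (m+1),
    Polynomial.C (a j / (j.factorial : ℝ)) * descPochhammer ℝ j with hQ
  have hQeval : ∀ n : ℕ, Q.eval (n : ℝ) = ∑ j ∈ Finset.range (m+1), (n.choose j : ℝ) * a j := by
    intro n
    rw [hQ, Polynomial.eval_finset_sum]
    apply Finset.sum_congr rfl
    intro j _
    rw [Polynomial.eval_mul, Polynomial.eval_C, descPochhammer_eval_eq_descFactorial,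
      Nat.descFactorial_eq_factorial_mul_choose]
    have : (j.factorial : ℝ) ≠ 0 := by positivity
    push_cast
    field_simp
  have hdp_deg : ∀ j : ℕ, (descPochhammer ℝ j).degree ≤ (j : WithBot ℕ) := by
    intro j
    have h1 : (descPochhammer ℝ j).natDegree = j := descPochhammer_natDegree (R := ℝ) j
    have := Polynomial.degree_le_natDegree (p := descPochhammer ℝ j)
    rwa [h1] at this
  have hQdeg : Q.degree < (t.card : ℕ) := by
    rw [htc]
    apply lt_of_le_of_lt (Polynomial.degree_sum_le _ _)
    rw [Finset.sup_lt_iff (by exact_mod_cast WithBot.bot_lt_coe (m+1))]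
    intro j hj
    refine lt_of_le_of_lt (le_trans (Polynomial.degree_mul_le _ _)
      (le_trans (add_le_add Polynomial.degree_C_le (hdp_deg j)) (by rw [zero_add]))) ?_
    exact_mod_cast Nat.lt_succ_of_le (Nat.lt_succ_iff.mp (Finset.mem_range.mp hj))
  have hQcoeff : Q.coeff m = ε / (m.factorial : ℝ) := by
    rw [hQ, Polynomial.finset_sum_coeff]
    rw [Finset.sum_eq_single_of_mem m (Finset.mem_range.mpr (by omega))]
    · rw [Polynomial.coeff_C_mul]
      have hmonic : (descPochhammer ℝ m).Monic := monic_descPochhammer ℝ m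
      have h1 : (descPochhammer ℝ m).coeff m = 1 := by
        have h2 := hmonic.coeff_natDegree
        rwa [descPochhammer_natDegree (R := ℝ) m] at h2
      rw [h1, mul_one, ha]
    · intro j hj hjm
      rw [Polynomial.coeff_C_mul]
      have : (descPochhammer ℝ j).coeff m = 0 := by
        apply Polynomial.coeff_eq_zero_of_natDegree_lt
        rw [descPochhammer_natDegree (R := ℝ) j]
        have h3 := Finset.mem_range.mp hj
        omega
      rw [this, mul_zero]
  set Qq : ℚ[X] := Lagrange.interpolate t (fun n => (n : ℚ)) v with hQq
  have hinjQ : Set.InjOn (fun n : ℕ => (n : ℚ)) t := fun a _ b _ h => Nat.cast_injective h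
  have hinjR : Set.InjOn (fun n : ℕ => (n : ℝ)) t := fun a _ b _ h => Nat.cast_injective h
  have hmapdeg : (Qq.map (algebraMap ℚ ℝ)).degree < (t.card : ℕ) :=
    lt_of_le_of_lt (Polynomial.degree_map_le) (Lagrange.degree_interpolate_lt _ hinjQ)
  have hQeq : Q = Qq.map (algebraMap ℚ ℝ) := by
    apply Polynomial.eq_of_degrees_lt_of_eval_index_eq (v := fun n : ℕ => (n : ℝ)) t
      hinjR hQdeg hmapdeg
    intro n hn
    rw [hQeval n, hvspec n hn]
    have hcast : ((n : ℝ)) = algebraMap ℚ ℝ ((n : ℚ)) := by push_cast; rfl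
    rw [hcast, Polynomial.eval_map, Polynomial.eval₂_at_apply]
    rw [Lagrange.eval_interpolate_at_node v hinjQ hn]
    rfl
  have hco : Q.coeff m = algebraMap ℚ ℝ (Qq.coeff m) := by
    rw [hQeq, Polynomial.coeff_map]
  rw [hQcoeff] at hco
  apply hε
  refine ⟨Qq.coeff m * (m.factorial : ℚ), ?_⟩
  have hfac : ((m.factorial : ℚ) : ℝ) ≠ 0 := by positivity
  push_cast
  rw [show ((Qq.coeff m : ℚ) : ℝ) = ε / (m.factorial : ℝ) from (by exact_mod_cast hco.symm)]
  field_simp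

end Arcs

section Torus

variable {m : ℕ} (hm : 1 ≤ m) (ε : ℝ)
  (f : (Fin m → UnitAddCircle) → Fin m → UnitAddCircle)
  (hf : ∀ (x : Fin m → UnitAddCircle) (i : Fin m),
      f x i = if i.val = 0 then x i + (ε : UnitAddCircle)
        else x i + x ⟨i.val - 1, lt_of_le_of_lt (Nat.sub_le _ _) i.isLt⟩)

include hf

theorem f_cont : Continuous f := by
  apply continuous_pi
  intro i
  have h1 : (fun x => f x i) = fun x : Fin m → UnitAddCircle =>
      if i.val = 0 then x i + (ε : UnitAddCircle)
      else x i + x ⟨i.val - 1, lt_of_le_of_lt (Nat.sub_le _ _) i.isLt⟩ := by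
    funext x; exact hf x i
  rw [h1]
  split_ifs
  · exact (continuous_apply i).add continuous_const
  · exact (continuous_apply i).add (continuous_apply _)

theorem f_inj : Function.Injective f := by
  intro a b hab
  funext i
  obtain ⟨i, hi⟩ := i
  induction i using Nat.strong_induction_on with
  | _ i ih =>
    have h := congrFun hab ⟨i, hi⟩
    rw [hf, hf] at h
    rcases Nat.eq_zero_or_pos i with h0 | h0
    · subst h0; simp at h; simpa using h
    · simp only [Nat.pos_iff_ne_zero.mp h0, if_neg] at h
      have hprev : a ⟨i - 1, lt_of_le_of_lt (Nat.sub_le _ _) hi⟩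
          = b ⟨i - 1, lt_of_le_of_lt (Nat.sub_le _ _) hi⟩ :=
        ih (i - 1) (by omega) _
      rw [hprev] at h
      exact add_right_cancel h

theorem f_surj : Function.Surjective f := by
  intro y
  set y' : ℕ → UnitAddCircle := fun j => if h : j < m then y ⟨j, h⟩ else 0 with hy'
  set g : ℕ → UnitAddCircle := fun j => Nat.rec (y' 0 - (ε : UnitAddCircle))
    (fun k gk => y' (k+1) - gk) j with hg
  refine ⟨fun i => g i.val, ?_⟩
  funext i
  rw [hf]
  obtain ⟨i, hi⟩ := i
  rcases Nat.eq_zero_or_pos i with h0 | h0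
  · subst h0
    simp only [if_pos rfl]
    show g 0 + _ = _
    simp [hg, hy', hi]
  · obtain ⟨k, rfl⟩ : ∃ k, i = k + 1 := ⟨i - 1, by omega⟩
    simp only [Nat.succ_ne_zero, if_neg]
    show g (k+1) + g ((k+1) - 1) = _
    simp only [Nat.add_sub_cancel, hg]
    show y' (k+1) - g k + g k = _
    simp [hy', hi]

theorem f_open : IsOpenMap f := by
  have hbij : Function.Bijective f := ⟨f_inj ε f hf, f_surj ε f hf⟩
  let e : (Fin m → UnitAddCircle) ≃ (Fin m → UnitAddCircle) := Equiv.ofBijective f hbij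
  have hce : Continuous e := f_cont ε f hf
  exact (Continuous.homeoOfEquivCompactToT2 (f := e) hce).isOpenMap

theorem iter_formula (x : Fin m → UnitAddCircle) :
    ∀ (n : ℕ) (i : ℕ) (hi : i < m), f^[n] x ⟨i, hi⟩ =
      (∑ j ∈ Finset.range (i+1), (n.choose j) • x ⟨i - j, by omega⟩)
        + (((n.choose (i+1) : ℝ) * ε : ℝ) : UnitAddCircle) := by
  intro n
  induction n with
  | zero =>
    intro i hi
    simp only [Function.iterate_zero_apply]
    rw [Finset.sum_eq_single_of_mem 0 (Finset.mem_range.mpr (by omega))]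
    · norm_num
    · intro j _ hj
      obtain ⟨k, rfl⟩ : ∃ k, j = k + 1 := ⟨j - 1, by omega⟩
      simp [Nat.choose_eq_zero_of_lt]
  | succ n ih =>
    intro i hi
    rw [Function.iterate_succ_apply', hf]
    rcases Nat.eq_zero_or_pos i with h0 | h0
    · subst h0
      simp only [if_pos rfl]
      rw [ih 0 hi]
      simp only [zero_add, Finset.sum_range_one, Nat.choose_self, one_smul,
        Nat.choose_one_right]
      rw [add_assoc]
      rw [← AddCircle.coe_add]
      push_cast
      ring_nf
      simp [Nat.choose_zero_right]
    · obtain ⟨k, rfl⟩ : ∃ k, i = k + 1 := ⟨i - 1, by omega⟩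
      rw [if_neg (by simp : ¬((⟨k+1, hi⟩ : Fin m) : ℕ) = 0)]
      have hk : k < m := by omega
      have e1 : (⟨k + 1 - 1, lt_of_le_of_lt (Nat.sub_le _ _) hi⟩ : Fin m) = ⟨k, hk⟩ := by
        simp
      rw [e1, ih (k+1) hi, ih k hk]
      have h1 : ∑ j ∈ Finset.range (k+1+1), ((n+1).choose j) • x ⟨k+1 - j, by omega⟩
          = (∑ j ∈ Finset.range (k+1), ((n+1).choose (j+1)) • x ⟨k+1 - (j+1), by omega⟩)
            + ((n+1).choose 0) • x ⟨k+1 - 0, by omega⟩ :=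
        Finset.sum_range_succ' _ _
      have h2 : ∑ j ∈ Finset.range (k+1+1), (n.choose j) • x ⟨k+1 - j, by omega⟩
          = (∑ j ∈ Finset.range (k+1), (n.choose (j+1)) • x ⟨k+1 - (j+1), by omega⟩)
            + (n.choose 0) • x ⟨k+1 - 0, by omega⟩ :=
        Finset.sum_range_succ' _ _
      have hidx : ∀ (j : ℕ) (hj : k+1-(j+1) < m) (hj' : k - j < m),
          (⟨k+1-(j+1), hj⟩ : Fin m) = ⟨k - j, hj'⟩ := by
        intro j hj hj'; apply Fin.ext; simp only []; omega
      have h3 : ∑ j ∈ Finset.range (k+1), ((n+1).choose (j+1)) • x ⟨k+1 - (j+1), by omega⟩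
          = (∑ j ∈ Finset.range (k+1), (n.choose j) • x ⟨k - j, by omega⟩)
            + ∑ j ∈ Finset.range (k+1), (n.choose (j+1)) • x ⟨k+1 - (j+1), by omega⟩ := by
        rw [← Finset.sum_add_distrib]
        apply Finset.sum_congr rfl
        intro j _
        rw [Nat.choose_succ_succ, add_smul, hidx j (by omega) (by omega)]
      have h4 : (((n+1).choose (k+1+1) : ℝ) * ε : ℝ)
          = ((n.choose (k+1+1) : ℝ) * ε + (n.choose (k+1) : ℝ) * ε : ℝ) := by
        rw [Nat.choose_succ_succ]
        push_cast
        ring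
      rw [h1, h2, h3, h4, AddCircle.coe_add]
      have h5 : ((n+1).choose 0) • x ⟨k+1-0, by omega⟩
          = (n.choose 0) • x ⟨k+1-0, by omega⟩ := by
        simp
      rw [h5]
      abel

include hm

theorem hits_finite (hε : Irrational ε) (x : Fin m → UnitAddCircle) :
    {n : ℕ | f^[n] x ⟨m-1, Nat.sub_lt hm Nat.one_pos⟩ = ((0:ℝ) : UnitAddCircle) ∨
      f^[n] x ⟨m-1, Nat.sub_lt hm Nat.one_pos⟩ = ((1/2:ℝ) : UnitAddCircle)}.Finite := by
  choose ξ hξmem hξ using fun i : Fin m => AddCircle.eq_coe_Ico (x i)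
  set a : ℕ → ℝ := fun j => if h : j < m then ξ ⟨m-1-j, by omega⟩ else ε with ha
  have ham : a m = ε := by simp [ha]
  apply Set.Finite.subset (poly_hits hε a ham)
  intro n hn
  have hform : f^[n] x ⟨m-1, Nat.sub_lt hm Nat.one_pos⟩ =
      ((∑ j ∈ Finset.range (m+1), (n.choose j : ℝ) * a j : ℝ) : UnitAddCircle) := by
    rw [iter_formula ε f hf x n (m-1) (Nat.sub_lt hm Nat.one_pos)]
    have hm1 : m - 1 + 1 = m := by omega
    rw [Finset.sum_range_succ (fun j => (n.choose j : ℝ) * a j) m, AddCircle.coe_add, ham]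
    congr 1
    · have hsum : ((∑ j ∈ Finset.range m, (n.choose j : ℝ) * a j : ℝ) : UnitAddCircle)
          = ∑ j ∈ Finset.range m, (((n.choose j : ℝ) * a j : ℝ) : UnitAddCircle) :=
        map_sum (QuotientAddGroup.mk' _) _ _
      rw [hsum]
      apply Finset.sum_congr (by rw [hm1])
      intro j hj
      have hjm : j < m := Finset.mem_range.mp hj
      have haj : a j = ξ ⟨m-1-j, by omega⟩ := dif_pos hjm
      rw [haj, ← hξ ⟨m-1-j, by omega⟩]
      rw [← AddCircle.coe_nsmul]
      congr 1
      rw [nsmul_eq_mul]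
    · rw [hm1]
  rcases hn with h | h
  · exact ⟨0, Or.inl rfl, by rw [← hform]; exact h⟩
  · exact ⟨1/2, Or.inr rfl, by rw [← hform]; exact h⟩

end Torus

/-- For the unipotent torus map with irreducible coding set
`U = {x : x_m ∈ [0,1/2)}`, distinct points have distinct essential evolutions,
and points at distance `> δ` are separated within the first `N(δ)` symbols. -/
theorem stmt17 (m : ℕ) (hm : 1 ≤ m) (ε : ℝ) (hε : Irrational ε)
    (f : (Fin m → UnitAddCircle) → Fin m → UnitAddCircle)
    (hf : ∀ (x : Fin m → UnitAddCircle) (i : Fin m),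
      f x i = if i.val = 0 then x i + (ε : UnitAddCircle)
        else x i + x ⟨i.val - 1, lt_of_le_of_lt (Nat.sub_le _ _) i.isLt⟩)
    (U : Set (Fin m → UnitAddCircle))
    (hU : U = {x | ∃ r : ℝ, 0 ≤ r ∧ r < 1 / 2 ∧
      x ⟨m - 1, Nat.sub_lt hm Nat.one_pos⟩ = (r : UnitAddCircle)})
    (hirr : IrredSet f U) :
    (∀ x y : Fin m → UnitAddCircle, x ≠ y →
      ∀ w : ℕ → Bool, EssEvol f U w x → ¬ EssEvol f U w y) ∧
    (∀ δ : ℝ, 0 < δ → ∃ N : ℕ, ∀ x y : Fin m → UnitAddCircle,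
      δ < dist x y → ∀ w v : ℕ → Bool,
        EssEvol f U w x → EssEvol f U v y → ∃ n < N, w n ≠ v n) := by
  have hfc : Continuous f := f_cont ε f hf
  have hfo : IsOpenMap f := f_open ε f hf
  set lastI : Fin m := ⟨m - 1, Nat.sub_lt hm Nat.one_pos⟩ with hlastI
  -- closure computations
  have hUeq : U = (fun z : Fin m → UnitAddCircle => z lastI) ⁻¹'
      ((fun t : ℝ => (t : UnitAddCircle)) '' Ico 0 (1/2)) := by
    rw [hU]
    ext z
    simp only [mem_setOf_eq, mem_preimage, mem_image, mem_Ico]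
    constructor
    · rintro ⟨r, h1, h2, h3⟩; exact ⟨r, ⟨h1, h2⟩, h3.symm⟩
    · rintro ⟨r, ⟨h1, h2⟩, h3⟩; exact ⟨r, h1, h2, h3.symm⟩
  have hclU : closure U = (fun z : Fin m → UnitAddCircle => z lastI) ⁻¹'
      ((fun t : ℝ => (t : UnitAddCircle)) '' Icc 0 (1/2)) := by
    rw [hUeq, ← closure_arc (by norm_num : (0:ℝ) < 1/2)]
    exact ((isOpenMap_eval lastI).preimage_closure_eq_closure_preimage
      (continuous_apply lastI) _).symm
  have hclUc : closure Uᶜ = (fun z : Fin m → UnitAddCircle => z lastI) ⁻¹'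
      ((fun t : ℝ => (t : UnitAddCircle)) '' Icc (1/2) 1) := by
    have hUc : Uᶜ = (fun z : Fin m → UnitAddCircle => z lastI) ⁻¹'
        ((fun t : ℝ => (t : UnitAddCircle)) '' Ico (1/2) 1) := by
      rw [hUeq, ← preimage_compl, compl_arc]
    rw [hUc, ← closure_arc (by norm_num : (1:ℝ)/2 < 1)]
    exact ((isOpenMap_eval lastI).preimage_closure_eq_closure_preimage
      (continuous_apply lastI) _).symm
  have hbd : ∀ z : Fin m → UnitAddCircle, z ∈ closure U → z ∈ closure Uᶜ →
      (z lastI = ((0:ℝ) : UnitAddCircle) ∨ z lastI = ((1/2:ℝ) : UnitAddCircle)) := by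
    intro z h1 h2
    rw [hclU] at h1
    rw [hclUc] at h2
    exact arcs_inter h1 h2
  -- Part 1
  have part1 : ∀ x y : Fin m → UnitAddCircle, x ≠ y →
      ∀ w : ℕ → Bool, EssEvol f U w x → ¬ EssEvol f U w y := by
    intro x y hxy w hx hy
    have hfinx := hits_finite hm ε f hf hε x
    have hfiny := hits_finite hm ε f hf hε y
    obtain ⟨K0, hK0⟩ := (hfinx.union hfiny).bddAbove
    set K : ℕ := K0 + 1 with hK
    have hnb : ∀ n, K ≤ n →
        ¬(f^[n] x lastI = ((0:ℝ) : UnitAddCircle) ∨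
          f^[n] x lastI = ((1/2:ℝ) : UnitAddCircle)) ∧
        ¬(f^[n] y lastI = ((0:ℝ) : UnitAddCircle) ∨
          f^[n] y lastI = ((1/2:ℝ) : UnitAddCircle)) := by
      intro n hKn
      constructor
      · intro hmem
        have : n ≤ K0 := hK0 (Or.inl hmem)
        omega
      · intro hmem
        have : n ≤ K0 := hK0 (Or.inr hmem)
        omega
    have hpq : f^[K] x ≠ f^[K] y := fun h => hxy ((f_inj ε f hf).iterate K h)
    have hgx : ∀ L, GoodCode f U L (fun n => w (n + K)) (f^[K] x) :=
      (essEvol_iff f U).mp (essEvol_iterate f U hfc hfo hx K)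
    have hgy : ∀ L, GoodCode f U L (fun n => w (n + K)) (f^[K] y) :=
      (essEvol_iff f U).mp (essEvol_iterate f U hfc hfo hy K)
    refine irred_no_pair hfc hirr hpq ?_
    intro n
    have hiterx : f^[n] (f^[K] x) = f^[n + K] x := by
      rw [← Function.iterate_add_apply]
    have hitery : f^[n] (f^[K] y) = f^[n + K] y := by
      rw [← Function.iterate_add_apply]
    have hcx := goodCode_closure f U hfc hgx n
    have hcy := goodCode_closure f U hfc hgy n
    cases hwn : w (n + K) with
    | true =>
        rw [hwn] at hcx hcy
        simp only [if_pos rfl] at hcx hcy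
        exact iff_of_true hcx hcy
    | false =>
        rw [hwn] at hcx hcy
        simp only [if_neg Bool.false_ne_true] at hcx hcy
        have hnbx := (hnb (n + K) (by omega)).1
        have hnby := (hnb (n + K) (by omega)).2
        refine iff_of_false ?_ ?_
        · intro hmem
          exact hnbx (by rw [← hiterx]; exact hbd _ hmem hcx)
        · intro hmem
          exact hnby (by rw [← hitery]; exact hbd _ hmem hcy)
  refine ⟨part1, ?_⟩
  -- Part 2 by compactness
  intro δ hδ
  by_contra hcon
  push_neg at hcon
  have hsel : ∀ N : ℕ, ∃ p : (Fin m → UnitAddCircle) × (Fin m → UnitAddCircle)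
      × (ℕ → Bool) × (ℕ → Bool),
      δ < dist p.1 p.2.1 ∧ EssEvol f U p.2.2.1 p.1 ∧ EssEvol f U p.2.2.2 p.2.1 ∧
        ∀ n < N, p.2.2.1 n = p.2.2.2 n := by
    intro N
    obtain ⟨x, y, hdist, w, v, hw, hv, hagree⟩ := hcon N
    exact ⟨(x, y, w, v), hdist, hw, hv, fun n hn => hagree n hn⟩
  choose F hF1 hF2 hF3 hF4 using hsel
  set 𝒰 : Ultrafilter ℕ := Ultrafilter.of atTop with h𝒰
  have h𝒰le : (𝒰 : Filter ℕ) ≤ atTop := Ultrafilter.of_le atTop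
  set z := (𝒰.map F).lim with hz
  have htend : Filter.Tendsto F (𝒰 : Filter ℕ) (nhds z) := Ultrafilter.le_nhds_lim (𝒰.map F)
  obtain ⟨x, y, w, v⟩ := z
  have htx : Filter.Tendsto (fun N => (F N).1) (𝒰 : Filter ℕ) (nhds x) :=
    (continuous_fst.tendsto _).comp htend
  have hty : Filter.Tendsto (fun N => (F N).2.1) (𝒰 : Filter ℕ) (nhds y) :=
    ((continuous_fst.comp continuous_snd).tendsto _).comp htend
  have htw : Filter.Tendsto (fun N => (F N).2.2.1) (𝒰 : Filter ℕ) (nhds w) :=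
    ((continuous_fst.comp (continuous_snd.comp continuous_snd)).tendsto _).comp htend
  have htv : Filter.Tendsto (fun N => (F N).2.2.2) (𝒰 : Filter ℕ) (nhds v) :=
    ((continuous_snd.comp (continuous_snd.comp continuous_snd)).tendsto _).comp htend
  -- distance in the limit
  have hdistlim : δ ≤ dist x y := by
    have hd : Filter.Tendsto (fun N => dist (F N).1 (F N).2.1) (𝒰 : Filter ℕ)
        (nhds (dist x y)) := (continuous_dist.tendsto _).comp (htx.prodMk_nhds hty)
    exact ge_of_tendsto hd (Filter.Eventually.of_forall fun N => (hF1 N).le)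
  have hxy : x ≠ y := by
    intro h
    rw [h, dist_self] at hdistlim
    linarith
  -- limit evolutions
  have hclosed := goodCode_isClosed f U
  have hwx : EssEvol f U w x := by
    rw [essEvol_iff]
    have hmem : ∀ᶠ N in (𝒰 : Filter ℕ),
        ((F N).2.2.1, (F N).1) ∈ {p : (ℕ → Bool) × (Fin m → UnitAddCircle) |
          ∀ L, GoodCode f U L p.1 p.2} :=
      Filter.Eventually.of_forall fun N => (essEvol_iff f U).mp (hF2 N)
    exact hclosed.mem_of_tendsto (htw.prodMk_nhds htx) hmem
  have hvy : EssEvol f U v y := by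
    rw [essEvol_iff]
    have hmem : ∀ᶠ N in (𝒰 : Filter ℕ),
        ((F N).2.2.2, (F N).2.1) ∈ {p : (ℕ → Bool) × (Fin m → UnitAddCircle) |
          ∀ L, GoodCode f U L p.1 p.2} :=
      Filter.Eventually.of_forall fun N => (essEvol_iff f U).mp (hF3 N)
    exact hclosed.mem_of_tendsto (htv.prodMk_nhds hty) hmem
  -- w = v
  have hwv : w = v := by
    funext n
    have hw' : ∀ᶠ N in (𝒰 : Filter ℕ), (F N).2.2.1 n = w n := by
      have := (tendsto_pi_nhds.mp htw) n
      rwa [nhds_discrete, Filter.tendsto_pure] at this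
    have hv' : ∀ᶠ N in (𝒰 : Filter ℕ), (F N).2.2.2 n = v n := by
      have := (tendsto_pi_nhds.mp htv) n
      rwa [nhds_discrete, Filter.tendsto_pure] at this
    have hgt : ∀ᶠ N in (𝒰 : Filter ℕ), n < N := h𝒰le (Filter.eventually_gt_atTop n)
    obtain ⟨N, h1, h2, h3⟩ := (hw'.and (hv'.and hgt)).exists
    rw [← h1, ← h2]
    exact hF4 N n h3
  exact part1 x y hxy w hwx (hwv ▸ hvy)
end
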